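/- arXiv:1405.0693 — 8 statements merged into one kernel-verified Lean document; each statement's English description precedes it below -/
import Mathlib

section
/- Let G be a non-locally compact Polish group and H a closed normal subgroup of G. If H is locally compact, then the quotient group G/H is not locally compact. -/
open Set Filter Topology

/-- A convergent sequence can be lifted through an open surjective map, provided the
domain is first countable. -/
lemma seq_lift_of_isOpenMap {X Y : Type*} [TopologicalSpace X] [TopologicalSpace Y]
    [FirstCountableTopology X] {f : X → Y} (hf : IsOpenMap f)
    (hsurj : Function.Surjective f) {y : ℕ → Y} {x : X}
    (hy : Tendsto y atTop (𝓝 (f x))) :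
    ∃ g : ℕ → X, (∀ n, f (g n) = y n) ∧ Tendsto g atTop (𝓝 x) := by
  classical
  obtain ⟨W, hW⟩ := (𝓝 x).exists_antitone_basis
  have hWmem : ∀ k, W k ∈ 𝓝 x := fun k => hW.mem k
  -- for each n, the set of "good scales"
  set P : ℕ → Set ℕ := fun n => {k | k ≤ n ∧ y n ∈ f '' W k} with hP
  have hbdd : ∀ n, BddAbove (P n) := fun n => ⟨n, fun k hk => hk.1⟩
  -- define the lift
  have hpick : ∀ n, (P n).Nonempty → ∃ x', x' ∈ W (sSup (P n)) ∧ f x' = y n := by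
    intro n hn
    have hmem : sSup (P n) ∈ P n := Nat.sSup_mem hn (hbdd n)
    obtain ⟨x', hx', hfx'⟩ := hmem.2
    exact ⟨x', hx', hfx'⟩
  set g : ℕ → X := fun n =>
    if h : (P n).Nonempty then (hpick n h).choose else (hsurj (y n)).choose with hg
  refine ⟨g, fun n => ?_, ?_⟩
  · by_cases h : (P n).Nonempty
    · simp only [hg, dif_pos h]
      exact (hpick n h).choose_spec.2
    · simp only [hg, dif_neg h]
      exact (hsurj (y n)).choose_spec
  · -- convergence
    rw [hW.toHasBasis.tendsto_right_iff]
    rintro k -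
    have h1 : ∀ᶠ n in atTop, y n ∈ f '' W k :=
      hy.eventually_mem (hf.image_mem_nhds (hWmem k))
    have h2 : ∀ᶠ n in atTop, k ≤ n := eventually_ge_atTop k
    filter_upwards [h1, h2] with n hn hkn
    have hk : k ∈ P n := ⟨hkn, hn⟩
    have hne : (P n).Nonempty := ⟨k, hk⟩
    have hle : k ≤ sSup (P n) := le_csSup (hbdd n) hk
    have : g n ∈ W (sSup (P n)) := by
      simp only [hg, dif_pos hne]
      exact (hpick n hne).choose_spec.1
    exact hW.antitone hle this

/-- If `G` is a non-locally compact Polish group and `H` a closed normal subgroup of `G`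
which is locally compact, then `G/H` is not locally compact. -/
theorem stmt0 {G : Type*} [Group G] [TopologicalSpace G] [IsTopologicalGroup G] [PolishSpace G]
    (hG : ¬ LocallyCompactSpace G) (H : Subgroup G) [H.Normal]
    (hHclosed : IsClosed (H : Set G)) (hHlc : LocallyCompactSpace H) :
    ¬ LocallyCompactSpace (G ⧸ H) := by
  intro hQlc
  apply hG
  letI := TopologicalSpace.upgradeIsCompletelyMetrizable G
  haveI : IsClosed ((H : Subgroup G) : Set G) := hHclosed
  -- a compact neighborhood of 1 in H, seen in G
  obtain ⟨K, hKcomp, hKnhds⟩ := exists_compact_mem_nhds (1 : H)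
  have hK'comp : IsCompact (Subtype.val '' K : Set G) := hKcomp.image continuous_subtype_val
  rw [mem_nhds_subtype] at hKnhds
  obtain ⟨W, hWnhds, hWsub⟩ := hKnhds
  -- a closed neighborhood S of 1 in G contained in W
  obtain ⟨S, hSnhds, hSclosed, hSW⟩ := exists_mem_nhds_isClosed_subset hWnhds
  -- S ∩ H is compact
  have hSH : IsCompact (S ∩ (H : Set G)) := by
    refine hK'comp.of_isClosed_subset (hSclosed.inter hHclosed) ?_
    rintro x ⟨hxS, hxH⟩
    exact ⟨⟨x, hxH⟩, hWsub (by simpa using hSW hxS), rfl⟩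
  -- pick closed symmetric neighborhoods V₁, V with V * V ⊆ V₁, V₁ * V₁ ⊆ S
  obtain ⟨V₁, hV₁nhds, hV₁closed, hV₁symm, hV₁S⟩ :=
    exists_closed_nhds_one_inv_eq_mul_subset hSnhds
  obtain ⟨V, hVnhds, hVclosed, hVsymm, hVV₁⟩ :=
    exists_closed_nhds_one_inv_eq_mul_subset hV₁nhds
  have h1V : (1 : G) ∈ V := mem_of_mem_nhds hVnhds
  have hVsubV₁ : V ⊆ V₁ := fun x hx => hVV₁ (by simpa using Set.mul_mem_mul hx h1V)
  have htriple : ∀ a ∈ V, ∀ b ∈ V, ∀ c ∈ V, a * (b * c) ∈ S := by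
    intro a ha b hb c hc
    exact hV₁S ⟨a, hVsubV₁ ha, b * c, hVV₁ ⟨b, hb, c, hc, rfl⟩, rfl⟩
  -- quotient map
  set π : G → G ⧸ H := QuotientGroup.mk with hπ
  have hπopen : IsOpenMap π := QuotientGroup.isOpenMap_coe
  have hπcont : Continuous π := QuotientGroup.continuous_mk
  have hπsurj : Function.Surjective π := QuotientGroup.mk_surjective
  -- a compact neighborhood C of 1 in G/H inside π(V)
  obtain ⟨C, hCnhds, hCsub, hCcomp⟩ :=
    LocallyCompactSpace.local_compact_nhds (π 1) (π '' V) (hπopen.image_mem_nhds hVnhds)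
  -- the candidate compact neighborhood of 1 in G
  set M : Set G := V ∩ π ⁻¹' C with hM
  have hMnhds : M ∈ 𝓝 (1 : G) :=
    inter_mem hVnhds (hπcont.continuousAt.preimage_mem_nhds hCnhds)
  have hMclosed : IsClosed M :=
    hVclosed.inter (hCcomp.isClosed.preimage hπcont)
  -- M is sequentially compact
  have hMseq : IsSeqCompact M := by
    intro u hu
    have huV : ∀ n, u n ∈ V := fun n => (hu n).1
    have huC : ∀ n, π (u n) ∈ C := fun n => (hu n).2
    obtain ⟨c, hcC, φ, hφ, hconv⟩ := hCcomp.tendsto_subseq huC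
    obtain ⟨v, hvV, hπv⟩ := hCsub hcC
    rw [← hπv] at hconv
    obtain ⟨g, hgf, hgt⟩ := seq_lift_of_isOpenMap hπopen hπsurj hconv
    -- h n lies in H
    set h : ℕ → G := fun n => (u (φ n))⁻¹ * g n with hh
    have hhH : ∀ n, h n ∈ H := fun n => QuotientGroup.eq.mp (hgf n).symm
    -- eventually h n ∈ S
    have hev : ∀ᶠ n in atTop, h n ∈ S ∩ (H : Set G) := by
      have hmem : {x : G | v⁻¹ * x ∈ V} ∈ 𝓝 v := by
        have : ContinuousAt (fun x : G => v⁻¹ * x) v := (continuous_mul_left v⁻¹).continuousAt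
        have := this.preimage_mem_nhds (by simpa using hVnhds)
        exact this
      filter_upwards [hgt.eventually_mem hmem] with n hn
      refine ⟨?_, hhH n⟩
      have huinv : (u (φ n))⁻¹ ∈ V := by rw [← hVsymm]; exact Set.inv_mem_inv.mpr (huV (φ n))
      have : h n = (u (φ n))⁻¹ * (v * (v⁻¹ * g n)) := by simp only [hh]; group
      rw [this]
      exact htriple _ huinv _ hvV _ hn
    -- extract a convergent subsequence of h
    obtain ⟨hlim, hhlim, ψ, hψ, hhconv⟩ := hSH.tendsto_subseq' hev.frequently
    refine ⟨v * hlim⁻¹, ?_, φ ∘ ψ, hφ.comp hψ, ?_⟩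
    · -- the limit is in M, shown below via closedness; postpone: prove convergence first
      have hconv' : Tendsto (u ∘ (φ ∘ ψ)) atTop (𝓝 (v * hlim⁻¹)) := by
        have hgψ : Tendsto (g ∘ ψ) atTop (𝓝 v) := hgt.comp hψ.tendsto_atTop
        have : Tendsto (fun n => g (ψ n) * (h (ψ n))⁻¹) atTop (𝓝 (v * hlim⁻¹)) :=
          hgψ.mul hhconv.inv
        refine this.congr fun n => ?_
        simp only [hh, Function.comp_apply]
        group
      exact hMclosed.mem_of_tendsto hconv' (Eventually.of_forall fun n => hu (φ (ψ n)))
    · have hgψ : Tendsto (g ∘ ψ) atTop (𝓝 v) := hgt.comp hψ.tendsto_atTop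
      have : Tendsto (fun n => g (ψ n) * (h (ψ n))⁻¹) atTop (𝓝 (v * hlim⁻¹)) :=
        hgψ.mul hhconv.inv
      refine this.congr fun n => ?_
      simp only [hh, Function.comp_apply]
      group
  have hMcomp : IsCompact M := hMseq.isCompact
  exact hMcomp.locallyCompactSpace_of_mem_nhds_of_group hMnhds
end

section
/- A Polish group G has a countable neighborhood basis at the identity consisting of open normal subgroups if and only if G is non-archimedean and admits a compatible two-sided invariant metric. -/
open Topology Pointwise

private lemma find_iff_eq {p q : ℕ → Prop} [DecidablePred p] [DecidablePred q]
    (hp : ∃ n, p n) (hq : ∃ n, q n) (h : ∀ n, p n ↔ q n) :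
    Nat.find hp = Nat.find hq :=
  le_antisymm (Nat.find_le ((h _).mpr (Nat.find_spec hq)))
    (Nat.find_le ((h _).mp (Nat.find_spec hp)))

private theorem aux_forward {G : Type*} [Group G] [tG : TopologicalSpace G]
    [IsTopologicalGroup G] [T1Space G] (B : ℕ → Subgroup G)
    (hopen : ∀ n, IsOpen (B n : Set G)) (hnorm : ∀ n, (B n).Normal)
    (hbasis : ∀ U ∈ 𝓝 (1 : G), ∃ n, (B n : Set G) ⊆ U) :
    ∃ m : MetricSpace G,
      m.toUniformSpace.toTopologicalSpace = tG ∧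
      (∀ g x y : G, m.toDist.dist (g * x) (g * y) = m.toDist.dist x y) ∧
      (∀ g x y : G, m.toDist.dist (x * g) (y * g) = m.toDist.dist x y) := by
  classical
  -- decreasing sequence of open normal subgroups
  set N : ℕ → Subgroup G := fun n => Nat.rec (B 0) (fun k Nk => Nk ⊓ B (k + 1)) n with hN
  have hN0 : N 0 = B 0 := rfl
  have hNs : ∀ n, N (n + 1) = N n ⊓ B (n + 1) := fun n => rfl
  have hNopen : ∀ n, IsOpen (N n : Set G) := by
    intro n; induction n with
    | zero => exact hopen 0
    | succ k ih => rw [hNs, Subgroup.coe_inf]; exact ih.inter (hopen (k + 1))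
  have hNnorm : ∀ n, (N n).Normal := by
    intro n; induction n with
    | zero => exact hnorm 0
    | succ k ih =>
      refine ⟨fun a ha g => ?_⟩
      rw [hNs, Subgroup.mem_inf] at ha ⊢
      exact ⟨ih.conj_mem a ha.1 g, (hnorm (k + 1)).conj_mem a ha.2 g⟩
  have hNle : ∀ n, N n ≤ B n := by
    intro n; cases n with
    | zero => exact le_rfl
    | succ k => rw [hNs]; exact inf_le_right
  have hNanti : ∀ {a b : ℕ}, a ≤ b → N b ≤ N a := by
    intro a b hab
    exact antitone_nat_of_succ_le (fun n => by rw [hNs]; exact inf_le_left) hab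
  -- separation
  have hex : ∀ {x y : G}, x ≠ y → ∃ n, x⁻¹ * y ∉ N n := by
    intro x y hxy
    have h1 : x⁻¹ * y ≠ 1 := by
      intro h; exact hxy (by rw [← mul_one x, ← h]; group)
    obtain ⟨n, hn⟩ := hbasis {x⁻¹ * y}ᶜ ((isOpen_compl_singleton).mem_nhds h1.symm)
    exact ⟨n, fun hmem => hn (hNle n hmem) rfl⟩
  -- the distance
  set d : G → G → ℝ := fun x y =>
    if h : x = y then 0 else (2⁻¹ : ℝ) ^ (Nat.find (hex h)) with hd
  have dnonneg : ∀ x y, 0 ≤ d x y := by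
    intro x y; rw [hd]; dsimp only
    split
    · exact le_rfl
    · positivity
  have key : ∀ (x y : G) (n : ℕ), d x y < (2⁻¹ : ℝ) ^ n ↔ x⁻¹ * y ∈ N n := by
    intro x y n
    rw [hd]; dsimp only
    split
    case isTrue h =>
      subst h
      simp only [inv_mul_cancel]
      exact ⟨fun _ => (N n).one_mem, fun _ => by positivity⟩
    case isFalse h =>
      rw [pow_lt_pow_iff_right_of_lt_one₀ (by norm_num) (by norm_num),
        Nat.lt_find_iff]
      constructor
      · intro hall
        exact not_not.mp (hall n le_rfl)
      · intro hmem m hm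
        exact not_not.mpr (hNanti hm hmem)
  have d_self : ∀ x, d x x = 0 := by intro x; rw [hd]; simp
  have d_eq : ∀ x y, d x y = 0 → x = y := by
    intro x y h
    by_contra hxy
    rw [hd] at h; dsimp only at h
    rw [dif_neg hxy] at h
    exact absurd h (by positivity)
  have d_comm : ∀ x y, d x y = d y x := by
    intro x y
    rw [hd]; dsimp only
    by_cases h : x = y
    · rw [dif_pos h, dif_pos h.symm]
    · rw [dif_neg h, dif_neg (Ne.symm h)]
      congr 1
      refine find_iff_eq _ _ (fun n => not_iff_not.mpr ?_)
      constructor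
      · intro hm; simpa using (N n).inv_mem hm
      · intro hm; simpa using (N n).inv_mem hm
  have d_tri : ∀ x y z, d x z ≤ d x y + d y z := by
    intro x y z
    have hle : d x z ≤ max (d x y) (d y z) := by
      by_contra hlt
      push_neg at hlt
      have hxz : x ≠ z := by
        intro h; subst h; rw [d_self] at hlt
        exact absurd hlt (not_lt.mpr (le_max_of_le_left (dnonneg _ _)))
      have hdxz : d x z = (2⁻¹ : ℝ) ^ (Nat.find (hex hxz)) := by
        rw [hd]; dsimp only; rw [dif_neg hxz]
      set n := Nat.find (hex hxz)
      have h1 : x⁻¹ * y ∈ N n := (key x y n).mp (lt_of_le_of_lt (le_max_left _ _) (hdxz ▸ hlt))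
      have h2 : y⁻¹ * z ∈ N n := (key y z n).mp (lt_of_le_of_lt (le_max_right _ _) (hdxz ▸ hlt))
      have h3 : x⁻¹ * z ∈ N n := by
        have := (N n).mul_mem h1 h2
        rwa [show x⁻¹ * y * (y⁻¹ * z) = x⁻¹ * z by group] at this
      have := (key x z n).mpr h3
      rw [← hdxz] at this
      exact lt_irrefl _ this
    calc d x z ≤ max (d x y) (d y z) := hle
      _ ≤ d x y + d y z := max_le_add_of_nonneg (dnonneg _ _) (dnonneg _ _)
  have H : ∀ s : Set G, IsOpen s ↔ ∀ x ∈ s, ∃ ε > 0, ∀ y, d x y < ε → y ∈ s := by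
    intro s
    constructor
    · intro hs x hx
      have hmem : (fun t => x * t) ⁻¹' s ∈ 𝓝 (1 : G) :=
        (continuous_mul_left x).continuousAt.preimage_mem_nhds
          (by rw [mul_one]; exact hs.mem_nhds hx)
      obtain ⟨n, hn⟩ := hbasis _ hmem
      refine ⟨(2⁻¹ : ℝ) ^ n, by positivity, fun y hy => ?_⟩
      have : x⁻¹ * y ∈ N n := (key x y n).mp hy
      have := hn (hNle n this)
      simpa using this
    · intro h
      rw [isOpen_iff_mem_nhds]
      intro x hx
      obtain ⟨ε, hε, hb⟩ := h x hx
      obtain ⟨n, hn⟩ : ∃ n : ℕ, (2⁻¹ : ℝ) ^ n < ε :=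
        exists_pow_lt_of_lt_one hε (by norm_num)
      have hco : IsOpen (x • (N n : Set G)) := (hNopen n).leftCoset x
      have hxmem : x ∈ x • (N n : Set G) := by
        rw [Set.mem_smul_set_iff_inv_smul_mem, smul_eq_mul, inv_mul_cancel]
        exact (N n).one_mem
      refine Filter.mem_of_superset (hco.mem_nhds hxmem) (fun y hy => ?_)
      rw [Set.mem_smul_set_iff_inv_smul_mem, smul_eq_mul] at hy
      exact hb y (lt_trans ((key x y n).mpr hy) hn)
  refine ⟨MetricSpace.ofDistTopology d d_self d_comm d_tri H d_eq, rfl, ?_, ?_⟩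
  · intro g x y
    show d (g * x) (g * y) = d x y
    rw [hd]; dsimp only
    by_cases h : x = y
    · rw [dif_pos (by rw [h]), dif_pos h]
    · rw [dif_neg (fun hc => h (mul_left_cancel hc)), dif_neg h]
      congr 1
      refine find_iff_eq _ _ (fun n => not_iff_not.mpr ?_)
      rw [show (g * x)⁻¹ * (g * y) = x⁻¹ * y by group]
  · intro g x y
    show d (x * g) (y * g) = d x y
    rw [hd]; dsimp only
    by_cases h : x = y
    · rw [dif_pos (by rw [h]), dif_pos h]
    · rw [dif_neg (fun hc => h (mul_right_cancel hc)), dif_neg h]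
      congr 1
      refine find_iff_eq _ _ (fun n => not_iff_not.mpr ?_)
      rw [show (x * g)⁻¹ * (y * g) = g⁻¹ * (x⁻¹ * y) * g by group]
      constructor
      · intro hm
        have := (hNnorm n).conj_mem _ hm g
        rwa [show g * (g⁻¹ * (x⁻¹ * y) * g) * g⁻¹ = x⁻¹ * y by group] at this
      · intro hm
        have := (hNnorm n).conj_mem _ hm g⁻¹
        rwa [show g⁻¹ * (x⁻¹ * y) * g⁻¹⁻¹ = g⁻¹ * (x⁻¹ * y) * g by group] at this

private theorem aux_back {G : Type*} [Group G] [tG : TopologicalSpace G]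
    [IsTopologicalGroup G] (na : NonarchimedeanGroup G) (m : MetricSpace G)
    (hm : m.toUniformSpace.toTopologicalSpace = tG)
    (hl : ∀ g x y : G, m.toDist.dist (g * x) (g * y) = m.toDist.dist x y)
    (hr : ∀ g x y : G, m.toDist.dist (x * g) (y * g) = m.toDist.dist x y) :
    ∃ B : ℕ → Subgroup G,
      (∀ n, IsOpen (B n : Set G)) ∧ (∀ n, (B n).Normal) ∧
      ∀ U ∈ 𝓝 (1 : G), ∃ n, (B n : Set G) ⊆ U := by
  classical
  set d : G → G → ℝ := m.toDist.dist with hdd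
  have hm' : m.toPseudoMetricSpace.toUniformSpace.toTopologicalSpace = tG := hm
  -- balls are open
  have hball_open : ∀ r : ℝ, IsOpen {x : G | d x 1 < r} := by
    intro r
    have h := @Metric.isOpen_ball G m.toPseudoMetricSpace 1 r
    rw [hm'] at h
    exact h
  have hone_mem : ∀ r : ℝ, 0 < r → (1 : G) ∈ {x : G | d x 1 < r} := by
    intro r hr'
    show d 1 1 < r
    rw [hdd, m.dist_self]; exact hr'
  -- neighborhoods of 1 contain balls
  have hnhds : ∀ U ∈ 𝓝 (1 : G), ∃ ε > (0 : ℝ), {x : G | d x 1 < ε} ⊆ U := by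
    intro U hU
    have h := (@Metric.mem_nhds_iff G m.toPseudoMetricSpace 1 U)
    rw [hm'] at h
    obtain ⟨ε, hε, hb⟩ := h.mp hU
    refine ⟨ε, hε, fun x hx => hb ?_⟩
    show d x 1 < ε
    exact hx
  -- conjugation invariance of distance to 1
  have hconj : ∀ g x : G, d (g * x * g⁻¹) 1 = d x 1 := by
    intro g x
    calc d (g * x * g⁻¹) 1 = d (g * x * g⁻¹ * g) (1 * g) := (hr g _ _).symm
      _ = d (g * x) (g * 1) := by rw [one_mul]; congr 1 <;> group
      _ = d x 1 := hl g x 1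
  -- main claim
  have claim : ∀ r : ℝ, 0 < r → ∃ N : Subgroup G,
      IsOpen (N : Set G) ∧ N.Normal ∧ (N : Set G) ⊆ {x : G | d x 1 < r} := by
    intro r hrpos
    obtain ⟨V, hV⟩ := na.is_nonarchimedean {x : G | d x 1 < r}
      ((hball_open r).mem_nhds (hone_mem r hrpos))
    obtain ⟨δ, hδ, hδsub⟩ := hnhds (V : Set G) (V.isOpen.mem_nhds V.one_mem)
    refine ⟨V.toSubgroup.normalCore, ?_, Subgroup.normalCore_normal _, ?_⟩
    · refine Subgroup.isOpen_of_mem_nhds _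
        (Filter.mem_of_superset ((hball_open δ).mem_nhds (hone_mem δ hδ)) ?_)
      intro x hx
      show ∀ b : G, b * x * b⁻¹ ∈ V.toSubgroup
      intro b
      apply hδsub
      show d (b * x * b⁻¹) 1 < δ
      rw [hconj]
      exact hx
    · exact fun x hx => hV (V.toSubgroup.normalCore_le hx)
  choose N hNopen hNnorm hNsub using fun n : ℕ =>
    claim (1 / ((n : ℝ) + 1)) (by positivity)
  refine ⟨N, hNopen, hNnorm, fun U hU => ?_⟩
  obtain ⟨ε, hε, hb⟩ := hnhds U hU
  obtain ⟨n, hn⟩ := exists_nat_one_div_lt hε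
  refine ⟨n, fun x hx => hb ?_⟩
  exact lt_trans (hNsub n hx) hn

/-- A Polish group `G` has a countable neighborhood basis at the identity consisting of
open normal subgroups iff `G` is non-archimedean and admits a compatible two-sided
invariant metric. -/
theorem stmt1 {G : Type*} [Group G] [tG : TopologicalSpace G] [IsTopologicalGroup G]
    [PolishSpace G] :
    (∃ B : ℕ → Subgroup G,
        (∀ n, IsOpen (B n : Set G)) ∧ (∀ n, (B n).Normal) ∧
        ∀ U ∈ 𝓝 (1 : G), ∃ n, (B n : Set G) ⊆ U) ↔
      (NonarchimedeanGroup G ∧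
        ∃ m : MetricSpace G,
          m.toUniformSpace.toTopologicalSpace = tG ∧
          (∀ g x y : G, m.toDist.dist (g * x) (g * y) = m.toDist.dist x y) ∧
          (∀ g x y : G, m.toDist.dist (x * g) (y * g) = m.toDist.dist x y)) := by
  constructor
  · rintro ⟨B, hopen, hnorm, hbasis⟩
    refine ⟨⟨fun U hU => ?_⟩, aux_forward B hopen hnorm hbasis⟩
    obtain ⟨n, hn⟩ := hbasis U hU
    exact ⟨⟨B n, hopen n⟩, hn⟩
  · rintro ⟨na, m, hm, hl, hr⟩
    exact aux_back na m hm hl hr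
end

section
/- Let G be a non-archimedean Polish group and g ∈ G. If the closed subgroup topologically generated by g is not discrete, then it is a profinite group topologically generated by a single element (i.e., it is pro-cyclic). -/
open Topology

open Filter Set
open scoped Pointwise

lemma isGδ_preimage' {X Y : Type*} [TopologicalSpace X] [TopologicalSpace Y]
    {f : X → Y} (hf : Continuous f) {s : Set Y} (hs : IsGδ s) : IsGδ (f ⁻¹' s) := by
  obtain ⟨T, hTo, hTc, rfl⟩ := hs
  rw [Set.preimage_sInter]
  exact IsGδ.biInter hTc fun t ht => ((hTo t ht).preimage hf).isGδ

/-- Alexandrov: a dense Polish subspace of a Polish space is Gδ. -/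
theorem dense_polish_isGδ {X : Type*} [TopologicalSpace X] [PolishSpace X]
    {s : Set X} [PolishSpace s] (hd : Dense s) : IsGδ s := by
  letI := TopologicalSpace.upgradeIsCompletelyMetrizable s
  set A : ℕ → Set X := fun n => {x | ∃ U : Set X, IsOpen U ∧ x ∈ U ∧
      ∀ a b : s, (a : X) ∈ U → (b : X) ∈ U → dist a b ≤ 1 / (n + 1)} with hA
  have hAo : ∀ n, IsOpen (A n) := by
    intro n
    rw [isOpen_iff_mem_nhds]
    rintro x ⟨U, hUo, hxU, hU⟩
    exact Filter.mem_of_superset (hUo.mem_nhds hxU) fun z hz => ⟨U, hUo, hz, hU⟩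
  have hsA : ∀ n, s ⊆ A n := by
    intro n y hy
    have hb : Metric.ball (⟨y, hy⟩ : s) (1 / (2 * (n + 1))) ∈ 𝓝 (⟨y, hy⟩ : s) :=
      Metric.ball_mem_nhds _ (by positivity)
    rw [mem_nhds_subtype] at hb
    obtain ⟨t, ht, hts⟩ := hb
    refine ⟨interior t, isOpen_interior, mem_interior_iff_mem_nhds.2 ht, ?_⟩
    intro a b ha hb
    have ha2 : (a : X) ∈ t := interior_subset ha
    have hb2 : (b : X) ∈ t := interior_subset hb
    have ha' : a ∈ Metric.ball (⟨y, hy⟩ : s) (1 / (2 * (n + 1))) := hts ha2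
    have hb' : b ∈ Metric.ball (⟨y, hy⟩ : s) (1 / (2 * (n + 1))) := hts hb2
    rw [Metric.mem_ball] at ha' hb'
    have htri := dist_triangle a (⟨y, hy⟩ : s) b
    have hsymm : dist (⟨y, hy⟩ : s) b = dist b (⟨y, hy⟩ : s) := dist_comm _ _
    have h2 : 1 / (2 * ((n : ℝ) + 1)) = (1 / ((n : ℝ) + 1)) / 2 := by rw [div_div]; ring_nf
    linarith
  have hAs : ⋂ n, A n ⊆ s := by
    intro x hx
    simp only [Set.mem_iInter] at hx
    choose U hUo hxU hU using hx
    -- antitone nbhd basis at x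
    obtain ⟨b, hb⟩ := (𝓝 x).exists_antitone_basis
    -- choose points of s
    have hne : ∀ n : ℕ, ((⋂ i ∈ Finset.range (n + 1), U i) ∩ interior (b n) ∩ s).Nonempty := by
      intro n
      have ho : IsOpen ((⋂ i ∈ Finset.range (n + 1), U i) ∩ interior (b n)) :=
        (isOpen_biInter_finset fun i _ => hUo i).inter isOpen_interior
      have hxm : x ∈ (⋂ i ∈ Finset.range (n + 1), U i) ∩ interior (b n) :=
        ⟨Set.mem_iInter₂.2 fun i _ => hxU i,
          mem_interior_iff_mem_nhds.2 (hb.1.mem_of_mem trivial)⟩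
      exact hd.inter_open_nonempty _ ho ⟨x, hxm⟩
    choose y hy using hne
    set z : ℕ → s := fun n => ⟨y n, (hy n).2⟩ with hz
    have hcau : CauchySeq z := by
      refine cauchySeq_of_le_tendsto_0 (fun n => 1 / (n + 1)) ?_ ?_
      · intro n m N hn hm
        have h1 : (y n) ∈ U N := by
          have := (hy n).1.1
          simp only [Set.mem_iInter] at this
          exact this N (Finset.mem_range.2 (by omega))
        have h2 : (y m) ∈ U N := by
          have := (hy m).1.1
          simp only [Set.mem_iInter] at this
          exact this N (Finset.mem_range.2 (by omega))
        exact hU N _ _ h1 h2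
      · exact tendsto_one_div_add_atTop_nhds_zero_nat
    obtain ⟨w, hw⟩ := cauchySeq_tendsto_of_complete hcau
    have hyx : Filter.Tendsto y Filter.atTop (𝓝 x) := hb.tendsto fun n => interior_subset (hy n).1.2
    have hyw : Filter.Tendsto y Filter.atTop (𝓝 (w : X)) :=
      ((continuous_subtype_val.tendsto w).comp hw)
    have : x = (w : X) := tendsto_nhds_unique hyx hyw
    rw [this]; exact w.2
  have : s = ⋂ n, A n := le_antisymm (Set.subset_iInter hsA) hAs
  rw [this]
  exact IsGδ.iInter_of_isOpen hAo

/-- A Polish topological group with a countable neighborhood basis at 1 of open normal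
subgroups of finite index is compact. -/
theorem compactSpace_of_open_normal_basis {A : Type*} [Group A] [TopologicalSpace A]
    [IsTopologicalGroup A] [PolishSpace A] (V : ℕ → Subgroup A) (hVn : ∀ n, (V n).Normal)
    (hVo : ∀ n, IsOpen (V n : Set A)) (hVf : ∀ n, Finite (A ⧸ V n))
    (hVb : ∀ W ∈ 𝓝 (1 : A), ∃ n, (V n : Set A) ⊆ W) : CompactSpace A := by
  haveI := hVn
  haveI : ∀ n, Finite (A ⧸ V n) := hVf
  haveI : ∀ n, Countable (A ⧸ V n) := fun n => Finite.to_countable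
  haveI : ∀ n, DiscreteTopology (A ⧸ V n) := fun n => QuotientGroup.discreteTopology (hVo n)
  haveI : ∀ n, CompactSpace (A ⧸ V n) := fun n => Finite.compactSpace
  haveI : T2Space A := inferInstance
  set P := ∀ n, A ⧸ V n with hP
  -- the diagonal homomorphism
  set F : A →* P := Pi.monoidHom (fun n => QuotientGroup.mk' (V n)) with hF
  have hFc : Continuous F := continuous_pi fun n => QuotientGroup.continuous_mk
  have hFi : Function.Injective F := by
    intro a b hab
    by_contra hne
    have h1 : a⁻¹ * b ≠ 1 := fun h => hne (by
      have := congrArg (a * ·) h; simpa [mul_assoc] using this.symm)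
    obtain ⟨n, hn⟩ := hVb {a⁻¹ * b}ᶜ
      (by exact IsOpen.mem_nhds (isOpen_compl_singleton) (by simpa using h1.symm))
    have h2 : (QuotientGroup.mk a : A ⧸ V n) = QuotientGroup.mk b := congrFun hab n
    rw [QuotientGroup.eq] at h2
    exact hn h2 rfl
  have hFind : IsInducing F := by
    rw [isInducing_iff_nhds]
    intro x
    refine le_antisymm ((hFc.tendsto x).le_comap) ?_
    intro W hW
    rw [← map_mul_left_nhds_one x] at hW
    rw [Filter.mem_map] at hW
    obtain ⟨n, hn⟩ := hVb _ hW
    rw [Filter.mem_comap]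
    refine ⟨(fun p => p n) ⁻¹' {F x n}, ?_, ?_⟩
    · exact IsOpen.mem_nhds ((continuous_apply n).isOpen_preimage _ (isOpen_discrete _)) rfl
    · intro a ha
      simp only [Set.mem_preimage, Set.mem_singleton_iff] at ha
      have h2 : (QuotientGroup.mk x : A ⧸ V n) = QuotientGroup.mk a := ha.symm
      rw [QuotientGroup.eq] at h2
      have := hn h2
      simpa using this
  have hFK : ∀ a, F a ∈ F.range.topologicalClosure :=
    fun a => Subgroup.le_topologicalClosure _ ⟨a, rfl⟩
  set K := F.range.topologicalClosure with hK
  have hKcl : IsClosed (K : Set P) := Subgroup.isClosed_topologicalClosure _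
  haveI : CompactSpace K := isCompact_iff_compactSpace.mp (hKcl.isCompact)
  haveI : PolishSpace K := hKcl.polishSpace
  set F' : A → K := fun a => ⟨F a, hFK a⟩ with hF'
  have hF'c : Continuous F' := hFc.subtype_mk _
  have hF'ind : IsInducing F' := IsInducing.of_comp hF'c continuous_subtype_val hFind
  have hF'i : Function.Injective F' := fun a b hab => hFi (congrArg Subtype.val hab)
  have hF'range : Dense (Set.range F') := by
    intro y
    rw [closure_subtype]
    have himg : Subtype.val '' Set.range F' = Set.range F := by
      ext p
      constructor
      · rintro ⟨q, ⟨a, rfl⟩, rfl⟩; exact ⟨a, rfl⟩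
      · rintro ⟨a, rfl⟩; exact ⟨F' a, ⟨a, rfl⟩, rfl⟩
    rw [himg]
    have h2 : (y : P) ∈ closure (F.range : Set P) := by
      rw [← Subgroup.topologicalClosure_coe]; exact y.2
    simpa using h2
  -- range F' is a Polish dense Gδ subgroup of the compact group K; Baire gives surjectivity
  haveI : PolishSpace (Set.range F') :=
    ((Topology.IsEmbedding.toHomeomorph (f := F') ⟨hF'ind, hF'i⟩).symm).isClosedEmbedding.polishSpace
  have hGδ : IsGδ (Set.range F') := dense_polish_isGδ hF'range
  have hF'surj : Function.Surjective F' := by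
    intro y
    have htd : Dense ((fun z : K => y⁻¹ * z) ⁻¹' (Set.range F')) :=
      hF'range.preimage (Homeomorph.mulLeft (y⁻¹ : K)).isOpenMap
    have htg : IsGδ ((fun z : K => y⁻¹ * z) ⁻¹' (Set.range F')) :=
      isGδ_preimage' (continuous_const.mul continuous_id) hGδ
    obtain ⟨u, hu1, hu2⟩ := (Dense.inter_of_Gδ hGδ htg hF'range htd).nonempty
    obtain ⟨a, ha⟩ := hu1
    obtain ⟨b, hb⟩ := hu2
    refine ⟨a * b⁻¹, ?_⟩
    have : F' (a * b⁻¹) = F' a * (F' b)⁻¹ := by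
      apply Subtype.ext
      simp [hF', map_mul, map_inv]
    rw [this, ha, hb]
    group
  have e : A ≃ₜ K :=
    (Equiv.ofBijective F' ⟨hF'i, hF'surj⟩).toHomeomorphOfIsInducing hF'ind
  exact e.symm.compactSpace

/-- In a non-archimedean Polish group, if the closed subgroup topologically generated by
an element `g` is not discrete, then it is pro-cyclic: a profinite (compact, totally
disconnected) group topologically generated by a single element. -/
theorem stmt4 {G : Type*} [Group G] [TopologicalSpace G] [NonarchimedeanGroup G]
    [PolishSpace G] (g : G)
    (hnd : ¬ DiscreteTopology ((Subgroup.zpowers g).topologicalClosure)) :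
    IsCompact ((Subgroup.zpowers g).topologicalClosure : Set G) ∧
    TotallyDisconnectedSpace ((Subgroup.zpowers g).topologicalClosure) ∧
    ∃ h : G, h ∈ (Subgroup.zpowers g).topologicalClosure ∧
      (Subgroup.zpowers h).topologicalClosure = (Subgroup.zpowers g).topologicalClosure := by
  classical
  have hT2 : T2Space G := inferInstance
  set Hs := (Subgroup.zpowers g).topologicalClosure with hHsdef
  have hg : g ∈ Hs := Subgroup.le_topologicalClosure _ (Subgroup.mem_zpowers g)
  have hclosed : IsClosed (Hs : Set G) := Subgroup.isClosed_topologicalClosure _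
  haveI hPol : PolishSpace Hs := hclosed.polishSpace
  -- total disconnectedness of G
  haveI htdG : TotallyDisconnectedSpace G := by
    constructor
    apply (@TotallySeparatedSpace.totallyDisconnectedSpace G _ (totallySeparatedSpace_iff_exists_isClopen.2 ?_)).1
    intro x y hxy
    have h1 : (1 : G) ∈ ({x⁻¹ * y}ᶜ : Set G) := by
      simp only [Set.mem_compl_iff, Set.mem_singleton_iff]
      intro h
      exact hxy (by rw [← mul_one x, ← h.symm]; group)
    obtain ⟨U, hU⟩ := NonarchimedeanGroup.is_nonarchimedean {x⁻¹ * y}ᶜ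
      (isOpen_compl_singleton.mem_nhds h1)
    refine ⟨x • (U : Set G), ⟨U.isClosed.smul x, U.isOpen.smul x⟩, ?_, ?_⟩
    · rw [Set.mem_smul_set_iff_inv_smul_mem]
      simpa using U.one_mem
    · intro hy
      rw [Set.mem_smul_set_iff_inv_smul_mem] at hy
      exact hU hy rfl
  -- key: every open subgroup contains a nonzero power of g
  have hpow : ∀ U : OpenSubgroup G, ∃ n : ℤ, n ≠ 0 ∧ g ^ n ∈ U := by
    by_contra hcon
    push_neg at hcon
    obtain ⟨U, hU⟩ := hcon
    apply hnd
    rw [discreteTopology_iff_isOpen_singleton]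
    intro x
    have hxcl : (x : G) ∈ closure ((Subgroup.zpowers g : Subgroup G) : Set G) := by
      rw [← Subgroup.topologicalClosure_coe]; exact x.2
    have hxU : (x : G) ∈ (x : G) • (U : Set G) := by
      rw [Set.mem_smul_set_iff_inv_smul_mem]; simpa using U.one_mem
    obtain ⟨z, hz1, hz2⟩ := (mem_closure_iff.mp hxcl) _ (U.isOpen.smul (x : G)) hxU
    obtain ⟨m, hm⟩ := Subgroup.mem_zpowers_iff.mp hz2
    have hxmem : (x : G) ∈ g ^ m • (U : Set G) := by
      rw [Set.mem_smul_set_iff_inv_smul_mem]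
      rw [Set.mem_smul_set_iff_inv_smul_mem] at hz1
      rw [← hm] at hz1
      have : ((g ^ m)⁻¹ * (x : G)) = ((x : G)⁻¹ * g ^ m)⁻¹ := by group
      rw [smul_eq_mul, this]
      exact U.toSubgroup.inv_mem hz1
    have hsub : (Hs : Set G) ∩ (g ^ m • (U : Set G)) ⊆ {g ^ m} := by
      intro w hw
      have hw1 : w ∈ closure ((Subgroup.zpowers g : Subgroup G) : Set G) := by
        rw [← Subgroup.topologicalClosure_coe]; exact hw.1
      have hw2 : w ∈ (g ^ m • (U : Set G)) ∩
          closure ((Subgroup.zpowers g : Subgroup G) : Set G) := ⟨hw.2, hw1⟩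
      have hw3 := (U.isOpen.smul (g ^ m)).inter_closure hw2
      have hsmall : (g ^ m • (U : Set G)) ∩ ((Subgroup.zpowers g : Subgroup G) : Set G)
          ⊆ {g ^ m} := by
        rintro v ⟨hv1, hv2⟩
        obtain ⟨j, hj⟩ := Subgroup.mem_zpowers_iff.mp hv2
        rw [Set.mem_smul_set_iff_inv_smul_mem, ← hj, smul_eq_mul] at hv1
        have hji : (g ^ m)⁻¹ * g ^ j = g ^ (j - m) := by
          rw [← zpow_neg, ← zpow_add]; ring_nf
        rw [hji] at hv1
        have : j - m = 0 := by
          by_contra hne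
          exact hU (j - m) hne hv1
        have : j = m := by omega
        rw [← hj, this]
        rfl
      have := (closure_mono hsmall) hw3
      rwa [closure_singleton] at this
    have hxeq : (x : G) = g ^ m := hsub ⟨x.2, hxmem⟩
    have hset : ({x} : Set Hs) = Subtype.val ⁻¹' (g ^ m • (U : Set G)) := by
      ext w
      simp only [Set.mem_singleton_iff, Set.mem_preimage]
      constructor
      · rintro rfl; exact hxmem
      · intro hw
        have : (w : G) = g ^ m := hsub ⟨w.2, hw⟩
        exact Subtype.ext (this.trans hxeq.symm)
    rw [hset]
    exact (U.isOpen.smul _).preimage continuous_subtype_val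
    -- commutativity of Hs
  have hcomm : ∀ a b : Hs, a * b = b * a := by
    letI : CommGroup Hs := Subgroup.commGroupTopologicalClosure (Subgroup.zpowers g)
      (fun a b => by
        obtain ⟨k, hk⟩ := Subgroup.mem_zpowers_iff.mp a.2
        obtain ⟨l, hl⟩ := Subgroup.mem_zpowers_iff.mp b.2
        apply Subtype.ext
        push_cast
        rw [← hk, ← hl]
        exact zpow_mul_comm g k l)
    exact fun a b => mul_comm a b
  -- countable basis of open subgroups of G
  obtain ⟨bs, hbs⟩ := (𝓝 (1 : G)).exists_antitone_basis
  have hWex : ∀ n : ℕ, ∃ Vn : OpenSubgroup G, (Vn : Set G) ⊆ bs n :=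
    fun n => NonarchimedeanGroup.is_nonarchimedean _ (hbs.1.mem_of_mem trivial)
  choose W hWb using hWex
  have basisProp : ∀ t ∈ 𝓝 (1 : G), ∃ n, (W n : Set G) ⊆ t := by
    intro t ht
    obtain ⟨n, -, hn⟩ := hbs.1.mem_iff.mp ht
    exact ⟨n, (hWb n).trans hn⟩
  -- the induced subgroups of Hs
  set V : ℕ → Subgroup Hs := fun n => (W n : Subgroup G).subgroupOf Hs with hVdef
  have hVcoe : ∀ n, (V n : Set Hs) = Subtype.val ⁻¹' (W n : Set G) := by
    intro n; ext w; simp [hVdef, Subgroup.mem_subgroupOf]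
  have hVn : ∀ n, (V n).Normal := by
    intro n
    constructor
    intro a ha b
    have : b * a * b⁻¹ = a := by rw [hcomm b a, mul_assoc, mul_inv_cancel, mul_one]
    rwa [this]
  have hVo : ∀ n, IsOpen (V n : Set Hs) :=
    fun n => Subgroup.subgroupOf_isOpen _ _ (W n).isOpen
  have hVf : ∀ n, Finite (Hs ⧸ V n) := by
    intro n
    obtain ⟨m, hm0, hgm⟩ := hpow (W n)
    set k : ℕ := m.natAbs with hkdef
    have hk : 0 < k := Int.natAbs_pos.mpr hm0
    have hgk : g ^ (k : ℤ) ∈ W n := by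
      rcases Int.natAbs_eq m with h | h
      · rwa [← h]
      · have : g ^ (k : ℤ) = (g ^ m)⁻¹ := by rw [h, zpow_neg, inv_inv]
        rw [this]
        exact (W n).toSubgroup.inv_mem hgm
    apply Finite.of_surjective
      (fun i : Fin k => (QuotientGroup.mk ((⟨g, hg⟩ : Hs) ^ (i : ℕ)) : Hs ⧸ V n))
    intro q
    induction q using QuotientGroup.induction_on with
    | H y =>
      have hycl : (y : G) ∈ closure ((Subgroup.zpowers g : Subgroup G) : Set G) := by
        rw [← Subgroup.topologicalClosure_coe]; exact y.2
      have hyU : (y : G) ∈ (y : G) • (W n : Set G) := by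
        rw [Set.mem_smul_set_iff_inv_smul_mem]; simpa using (W n).one_mem
      obtain ⟨z, hz1, hz2⟩ := (mem_closure_iff.mp hycl) _ ((W n).isOpen.smul (y : G)) hyU
      obtain ⟨m', hm'⟩ := Subgroup.mem_zpowers_iff.mp hz2
      rw [Set.mem_smul_set_iff_inv_smul_mem, ← hm', smul_eq_mul] at hz1
      set r : ℤ := m' % (k : ℤ) with hrdef
      have hknz : (k : ℤ) ≠ 0 := by exact_mod_cast hk.ne'
      have hr0 : 0 ≤ r := Int.emod_nonneg m' hknz
      have hrk : r < (k : ℤ) := Int.emod_lt_of_pos m' (by exact_mod_cast hk)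
      refine ⟨⟨r.toNat, by omega⟩, ?_⟩
      rw [QuotientGroup.eq]
      rw [hVdef, Subgroup.mem_subgroupOf]
      have hcast : ((((⟨g, hg⟩ : Hs) ^ (r.toNat : ℕ))⁻¹ * y : Hs) : G)
          = (g ^ r)⁻¹ * (y : G) := by
        push_cast
        rw [← zpow_natCast, Int.toNat_of_nonneg hr0]
      rw [hcast]
      have hsplit : (g ^ r)⁻¹ * (y : G)
          = (((y : G)⁻¹ * g ^ m') * ((g ^ (k : ℤ)) ^ (m' / (k : ℤ)))⁻¹)⁻¹ := by
        rw [← zpow_mul]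
        have h2 : (k : ℤ) * (m' / (k : ℤ)) = m' - r := by
          have h3 := Int.mul_ediv_add_emod m' (k : ℤ)
          rw [hrdef]; omega
        rw [h2]
        group
      rw [hsplit]
      apply (W n).toSubgroup.inv_mem
      exact (W n).toSubgroup.mul_mem hz1
        ((W n).toSubgroup.inv_mem ((W n).toSubgroup.zpow_mem hgk _))
  have hVb : ∀ Wt ∈ 𝓝 (1 : Hs), ∃ n, (V n : Set Hs) ⊆ Wt := by
    intro Wt hWt
    rw [mem_nhds_subtype] at hWt
    obtain ⟨t, ht, hts⟩ := hWt
    obtain ⟨n, hn⟩ := basisProp t ht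
    refine ⟨n, ?_⟩
    rw [hVcoe n]
    exact (Set.preimage_mono hn).trans hts
  haveI hcs : CompactSpace Hs := compactSpace_of_open_normal_basis V hVn hVo hVf hVb
  exact ⟨isCompact_iff_compactSpace.mpr hcs, inferInstance, g, hg, rfl⟩
end

section
/- Let Gₙ (n ∈ ℕ) be Polish groups, each equipped with a compatible invariant metric dₙ. Then the group c₀(Gₙ,dₙ) = {g ∈ ∏ₙ Gₙ : dₙ(g(n), e) → 0}, endowed with the supremum metric d_s(g,h) = supₙ dₙ(g(n), h(n)), is a Polish group. -/
open Topology Filter Set NNReal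

namespace Stmt5Aux

variable {G' : ℕ → Type*} [∀ n, Group (G' n)] [∀ n, MetricSpace (G' n)]

/-- Abbreviation for the invariance hypothesis. -/
def Inv (G' : ℕ → Type*) [∀ n, Group (G' n)] [∀ n, MetricSpace (G' n)] : Prop :=
  ∀ (n : ℕ) (g x y : G' n),
    dist (g * x) (g * y) = dist x y ∧ dist (x * g) (y * g) = dist x y

theorem dist_inv_inv (hinv : Inv G') (n : ℕ) (x y : G' n) :
    dist x⁻¹ y⁻¹ = dist x y := by
  have h1 : dist (x * x⁻¹) (x * y⁻¹) = dist x⁻¹ y⁻¹ := (hinv n x x⁻¹ y⁻¹).1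
  have h2 : dist (1 * y) (x * y⁻¹ * y) = dist 1 (x * y⁻¹) := (hinv n y 1 (x * y⁻¹)).2
  simp only [mul_inv_cancel, one_mul, inv_mul_cancel_right] at h1 h2
  rw [← h1, ← h2, dist_comm]

theorem dist_mul_mul (hinv : Inv G') (n : ℕ) (a b c d : G' n) :
    dist (a * b) (c * d) ≤ dist a c + dist b d := by
  calc dist (a * b) (c * d) ≤ dist (a * b) (a * d) + dist (a * d) (c * d) := dist_triangle _ _ _
    _ = dist b d + dist a c := by rw [(hinv n a b d).1, (hinv n d a c).2]
    _ = dist a c + dist b d := add_comm _ _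

/-- The `c₀` subgroup. -/
def c0 (hinv : Inv G') : Subgroup (∀ n, G' n) where
  carrier := {g : ∀ n, G' n | Tendsto (fun n => dist (g n) (1 : G' n)) atTop (𝓝 0)}
  one_mem' := by
    simpa using (tendsto_const_nhds : Tendsto (fun _ : ℕ => (0 : ℝ)) atTop (𝓝 0))
  mul_mem' := by
    intro a b ha hb
    refine squeeze_zero (fun n => dist_nonneg) (fun n => ?_) (by simpa using ha.add hb)
    calc dist ((a * b) n) 1 = dist (a n * b n) (1 * 1) := by simp
      _ ≤ dist (a n) 1 + dist (b n) 1 := dist_mul_mul hinv n _ _ _ _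
  inv_mem' := by
    intro a ha
    have h : ∀ n, dist ((a⁻¹ : ∀ n, G' n) n) (1 : G' n) = dist (a n) 1 := by
      intro n
      have := dist_inv_inv hinv n (a n) 1
      simpa using this
    simp only [Set.mem_setOf_eq] at ha ⊢
    exact ha.congr fun n => (h n).symm

theorem mem_c0 {hinv : Inv G'} {g : ∀ n, G' n} :
    g ∈ c0 hinv ↔ Tendsto (fun n => dist (g n) (1 : G' n)) atTop (𝓝 0) := Iff.rfl

theorem bddAbove_dist {g h : ∀ n, G' n}
    (hg : Tendsto (fun n => dist (g n) (1 : G' n)) atTop (𝓝 0))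
    (hh : Tendsto (fun n => dist (h n) (1 : G' n)) atTop (𝓝 0)) :
    BddAbove (Set.range fun n => dist (g n) (h n)) := by
  obtain ⟨C, hC⟩ := (hg.add hh).bddAbove_range
  refine ⟨C, ?_⟩
  rintro x ⟨n, rfl⟩
  exact le_trans (dist_triangle_right _ _ _) (hC ⟨n, rfl⟩)

end Stmt5Aux

namespace Stmt5Aux

variable {G' : ℕ → Type*} [∀ n, Group (G' n)] [∀ n, MetricSpace (G' n)]

variable (hinv : Inv G')

theorem dist_le_sup {g h : ∀ n, G' n}
    (hg : Tendsto (fun n => dist (g n) (1 : G' n)) atTop (𝓝 0))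
    (hh : Tendsto (fun n => dist (h n) (1 : G' n)) atTop (𝓝 0)) (n : ℕ) :
    dist (g n) (h n) ≤ ⨆ k, dist (g k) (h k) :=
  le_ciSup (bddAbove_dist hg hh) n

theorem sup_le {g h : ∀ n, G' n} {c : ℝ} (hc : ∀ n, dist (g n) (h n) ≤ c) :
    (⨆ k, dist (g k) (h k)) ≤ c :=
  ciSup_le hc

/-- The supremum metric on `c0`. -/
noncomputable def supMetric : MetricSpace (c0 hinv) where
  dist g h := ⨆ n, dist (g.1 n) (h.1 n)
  dist_self g := by simp
  dist_comm g h := by simp only [dist_comm]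
  dist_triangle f g h :=
    sup_le fun n => (dist_triangle _ (g.1 n) _).trans
      (add_le_add (dist_le_sup f.2 g.2 n) (dist_le_sup g.2 h.2 n))
  eq_of_dist_eq_zero := by
    intro g h hd
    have : ∀ n, dist (g.1 n) (h.1 n) = 0 := fun n =>
      le_antisymm (hd ▸ dist_le_sup g.2 h.2 n) dist_nonneg
    exact Subtype.ext (funext fun n => eq_of_dist_eq_zero (this n))

theorem supMetric_dist (g h : c0 hinv) :
    (supMetric hinv).toDist.dist g h = ⨆ n, dist (g.1 n) (h.1 n) := rfl

end Stmt5Aux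

namespace Stmt5Aux

variable {G' : ℕ → Type*} [∀ n, Group (G' n)] [∀ n, MetricSpace (G' n)]
variable (hinv : Inv G')

theorem topGroup :
    @IsTopologicalGroup (c0 hinv) (supMetric hinv).toUniformSpace.toTopologicalSpace _ := by
  letI := supMetric hinv
  letI : UniformSpace ↥(c0 hinv) := (supMetric hinv).toUniformSpace
  letI : TopologicalSpace ↥(c0 hinv) := (supMetric hinv).toUniformSpace.toTopologicalSpace
  have hmul : LipschitzWith 2 (fun p : c0 hinv × c0 hinv => p.1 * p.2) := by
    refine LipschitzWith.of_dist_le_mul fun p q => ?_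
    have h1 : dist (p.1 * p.2) (q.1 * q.2) ≤ dist p.1 q.1 + dist p.2 q.2 := by
      refine sup_le fun n => ?_
      have := dist_mul_mul hinv n (p.1.1 n) (p.2.1 n) (q.1.1 n) (q.2.1 n)
      exact this.trans (add_le_add (dist_le_sup p.1.2 q.1.2 n) (dist_le_sup p.2.2 q.2.2 n))
    refine h1.trans ?_
    rw [Prod.dist_eq]
    have : ((2 : ℝ≥0) : ℝ) = 2 := by norm_num
    rw [this, two_mul]
    exact add_le_add (le_max_left _ _) (le_max_right _ _)
  have hinvc : Isometry (fun g : c0 hinv => g⁻¹) := by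
    refine Isometry.of_dist_eq fun g h => ?_
    show (⨆ n, dist ((g⁻¹).1 n) ((h⁻¹).1 n)) = ⨆ n, dist (g.1 n) (h.1 n)
    congr 1
    funext n
    exact dist_inv_inv hinv n (g.1 n) (h.1 n)
  exact { continuous_mul := hmul.continuous, continuous_inv := hinvc.continuous }

theorem continuous_incl :
    @Continuous (c0 hinv) (∀ n, G' n) (supMetric hinv).toUniformSpace.toTopologicalSpace _
      (fun g => g.1) := by
  letI := supMetric hinv
  letI : UniformSpace ↥(c0 hinv) := (supMetric hinv).toUniformSpace
  letI : TopologicalSpace ↥(c0 hinv) := (supMetric hinv).toUniformSpace.toTopologicalSpace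
  refine continuous_pi fun n => ?_
  refine Metric.continuous_iff.2 fun g ε hε => ⟨ε, hε, fun h hd => ?_⟩
  exact lt_of_le_of_lt (dist_le_sup h.2 g.2 n) hd

theorem separable [∀ n, PolishSpace (G' n)] :
    @TopologicalSpace.SeparableSpace (c0 hinv)
      (supMetric hinv).toUniformSpace.toTopologicalSpace := by
  letI := supMetric hinv
  letI : UniformSpace ↥(c0 hinv) := (supMetric hinv).toUniformSpace
  letI : TopologicalSpace ↥(c0 hinv) := (supMetric hinv).toUniformSpace.toTopologicalSpace
  have hne : ∀ n, Nonempty (G' n) := fun n => ⟨1⟩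
  let u : ∀ n, ℕ → G' n := fun n => TopologicalSpace.denseSeq (G' n)
  have mem : ∀ p : Σ N : ℕ, Fin N → ℕ,
      (fun n => if h : n < p.1 then u n (p.2 ⟨n, h⟩) else 1) ∈ c0 hinv := by
    intro p
    rw [mem_c0]
    refine Tendsto.congr' ?_ tendsto_const_nhds
    filter_upwards [eventually_ge_atTop p.1] with n hn
    rw [dif_neg (by omega)]
    simp
  let f : (Σ N : ℕ, Fin N → ℕ) → c0 hinv := fun p => ⟨_, mem p⟩
  refine ⟨⟨Set.range f, Set.countable_range f, ?_⟩⟩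
  refine (Metric.denseRange_iff.mpr ?_ : DenseRange f)
  intro g ε hε
  obtain ⟨N, hN⟩ := Metric.tendsto_atTop.1 g.2 (ε / 2) (half_pos hε)
  have hN' : ∀ n ≥ N, dist (g.1 n) 1 < ε / 2 := by
    intro n hn
    have := hN n hn
    rwa [Real.dist_eq, sub_zero, abs_of_nonneg dist_nonneg] at this
  have hd : ∀ n : Fin N, ∃ k, dist (g.1 n.1) (u n.1 k) < ε / 2 := fun n =>
    Metric.denseRange_iff.1 (TopologicalSpace.denseRange_denseSeq _) _ (ε / 2) (half_pos hε)
  choose c hc using hd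
  refine ⟨⟨N, c⟩, ?_⟩
  have : dist g (f ⟨N, c⟩) ≤ ε / 2 := by
    refine sup_le fun n => ?_
    by_cases h : n < N
    · have : (f ⟨N, c⟩).1 n = u n (c ⟨n, h⟩) := dif_pos h
      rw [this]
      exact (hc ⟨n, h⟩).le
    · have : (f ⟨N, c⟩).1 n = 1 := dif_neg h
      rw [this]
      exact (hN' n (le_of_not_gt h)).le
  exact lt_of_le_of_lt this (half_lt_self hε)

end Stmt5Aux

namespace Stmt5Aux

theorem top_eq_of_dist {X : Type*} (m₁ m₂ : MetricSpace X)
    (h₁ : ∀ x ε, 0 < ε → ∃ δ > 0, ∀ y, m₁.toDist.dist y x < δ → m₂.toDist.dist y x < ε)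
    (h₂ : ∀ x ε, 0 < ε → ∃ δ > 0, ∀ y, m₂.toDist.dist y x < δ → m₁.toDist.dist y x < ε) :
    m₁.toUniformSpace.toTopologicalSpace = m₂.toUniformSpace.toTopologicalSpace := by
  have c₁ : @Continuous X X m₁.toUniformSpace.toTopologicalSpace
      m₂.toUniformSpace.toTopologicalSpace id := by
    refine (@Metric.continuous_iff X X m₁.toPseudoMetricSpace m₂.toPseudoMetricSpace id).2 ?_
    intro b ε hε
    obtain ⟨δ, hδ, hy⟩ := h₁ b ε hε
    exact ⟨δ, hδ, fun a ha => hy a ha⟩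
  have c₂ : @Continuous X X m₂.toUniformSpace.toTopologicalSpace
      m₁.toUniformSpace.toTopologicalSpace id := by
    refine (@Metric.continuous_iff X X m₂.toPseudoMetricSpace m₁.toPseudoMetricSpace id).2 ?_
    intro b ε hε
    obtain ⟨δ, hδ, hy⟩ := h₂ b ε hε
    exact ⟨δ, hδ, fun a ha => hy a ha⟩
  exact le_antisymm (continuous_id_iff_le.1 c₁) (continuous_id_iff_le.1 c₂)

end Stmt5Aux

namespace Stmt5Aux

variable {G' : ℕ → Type*} [∀ n, Group (G' n)] [∀ n, MetricSpace (G' n)]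
variable (hinv : Inv G')

theorem exists_completeMetric [∀ n, PolishSpace (G' n)] :
    ∃ D : MetricSpace (c0 hinv),
      D.toUniformSpace.toTopologicalSpace = (supMetric hinv).toUniformSpace.toTopologicalSpace ∧
      @CompleteSpace (c0 hinv) D.toUniformSpace := by
  obtain ⟨M, hMt, hMc⟩ := (inferInstance : PolishSpace (∀ n, G' n)).complete
  set SD : c0 hinv → c0 hinv → ℝ := fun g h => ⨆ n, dist (g.1 n) (h.1 n) with hSD
  have SD_nonneg : ∀ g h : c0 hinv, 0 ≤ SD g h := fun g h =>
    dist_nonneg.trans (dist_le_sup g.2 h.2 0)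
  have Mnn : ∀ x y : ∀ n, G' n, 0 ≤ M.toDist.dist x y := fun x y =>
    @dist_nonneg _ M.toPseudoMetricSpace x y
  let D : MetricSpace (c0 hinv) :=
    { dist := fun g h => SD g h + M.toDist.dist g.1 h.1
      dist_self := fun g => by
        show SD g g + M.toDist.dist g.1 g.1 = 0
        have h1 : SD g g = 0 := by simp [hSD]
        have h2 : M.toDist.dist g.1 g.1 = 0 := M.dist_self g.1
        rw [h1, h2, add_zero]
      dist_comm := fun g h => by
        show SD g h + M.toDist.dist g.1 h.1 = SD h g + M.toDist.dist h.1 g.1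
        have h1 : SD g h = SD h g := by simp [hSD, dist_comm]
        rw [h1, M.dist_comm]
      dist_triangle := fun f g h => by
        show SD f h + M.toDist.dist f.1 h.1 ≤
          (SD f g + M.toDist.dist f.1 g.1) + (SD g h + M.toDist.dist g.1 h.1)
        have h1 : SD f h ≤ SD f g + SD g h := sup_le fun n =>
          (dist_triangle _ (g.1 n) _).trans
            (add_le_add (dist_le_sup f.2 g.2 n) (dist_le_sup g.2 h.2 n))
        have h2 := M.dist_triangle f.1 g.1 h.1
        linarith
      eq_of_dist_eq_zero := by
        intro g h hd
        have hd' : SD g h + M.toDist.dist g.1 h.1 = 0 := hd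
        have hM : M.toDist.dist g.1 h.1 = 0 := by
          have := SD_nonneg g h
          have := Mnn g.1 h.1
          linarith
        exact Subtype.ext (M.eq_of_dist_eq_zero hM) }
  -- topology of D equals topology of the sup metric
  have hcont := continuous_incl hinv
  have htop : D.toUniformSpace.toTopologicalSpace =
      (supMetric hinv).toUniformSpace.toTopologicalSpace := by
    refine top_eq_of_dist D (supMetric hinv) ?_ ?_
    · intro x ε hε
      refine ⟨ε, hε, fun y hy => ?_⟩
      have hy' : SD y x + M.toDist.dist y.1 x.1 < ε := hy
      show SD y x < ε
      have := Mnn y.1 x.1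
      linarith
    · intro x ε hε
      have hball : @IsOpen (∀ n, G' n) M.toUniformSpace.toTopologicalSpace
          (@Metric.ball _ M.toPseudoMetricSpace x.1 (ε / 2)) :=
        @Metric.isOpen_ball _ M.toPseudoMetricSpace _ _
      rw [hMt] at hball
      have hopen := (continuous_def.1 hcont) _ hball
      have hx : x ∈ (fun g : c0 hinv => g.1) ⁻¹'
          (@Metric.ball _ M.toPseudoMetricSpace x.1 (ε / 2)) := by
        show M.toDist.dist x.1 x.1 < ε / 2
        rw [M.dist_self]
        linarith
      obtain ⟨δ, hδ, hsub⟩ :=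
        (@Metric.isOpen_iff (c0 hinv) (supMetric hinv).toPseudoMetricSpace _).1 hopen x hx
      refine ⟨min δ (ε / 2), lt_min hδ (half_pos hε), fun y hy => ?_⟩
      have hy1 : SD y x < δ := lt_of_lt_of_le hy (min_le_left _ _)
      have hy2 : y ∈ @Metric.ball (c0 hinv) (supMetric hinv).toPseudoMetricSpace x δ := hy1
      have hy3 : M.toDist.dist y.1 x.1 < ε / 2 := hsub hy2
      have hy4 : SD y x < ε / 2 := lt_of_lt_of_le hy (min_le_right _ _)
      show SD y x + M.toDist.dist y.1 x.1 < ε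
      linarith
  -- completeness of D
  have hDc : @CompleteSpace (c0 hinv) D.toUniformSpace := by
    refine @Metric.complete_of_cauchySeq_tendsto _ D.toPseudoMetricSpace ?_
    intro u hu
    have hu' := (@Metric.cauchySeq_iff (c0 hinv) ℕ D.toPseudoMetricSpace _ _ _).1 hu
    have hMcauchy : @CauchySeq (∀ n, G' n) ℕ M.toUniformSpace _ (fun k => (u k).1) := by
      refine (@Metric.cauchySeq_iff _ ℕ M.toPseudoMetricSpace _ _ _).2 ?_
      intro ε hε
      obtain ⟨N, hN⟩ := hu' ε hε
      refine ⟨N, fun a ha b hb => ?_⟩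
      have hD : SD (u a) (u b) + M.toDist.dist (u a).1 (u b).1 < ε := hN a ha b hb
      have := SD_nonneg (u a) (u b)
      show M.toDist.dist (u a).1 (u b).1 < ε
      linarith
    obtain ⟨f, hf⟩ := @cauchySeq_tendsto_of_complete _ ℕ M.toUniformSpace _ hMc _ hMcauchy
    have hMd : Tendsto (fun k => M.toDist.dist (u k).1 f) atTop (𝓝 0) :=
      (@tendsto_iff_dist_tendsto_zero _ _ M.toPseudoMetricSpace _ _ _).1 hf
    rw [hMt] at hf
    have hcoord : ∀ n, Tendsto (fun k => (u k).1 n) atTop (𝓝 (f n)) := fun n =>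
      ((continuous_apply n).tendsto f).comp hf
    have key : ∀ ε > 0, ∃ N, ∀ k ≥ N, ∀ n, dist ((u k).1 n) (f n) ≤ ε := by
      intro ε hε
      obtain ⟨N, hN⟩ := hu' ε hε
      refine ⟨N, fun k hk n => ?_⟩
      have hT : Tendsto (fun l => dist ((u k).1 n) ((u l).1 n)) atTop
          (𝓝 (dist ((u k).1 n) (f n))) := tendsto_const_nhds.dist (hcoord n)
      refine le_of_tendsto hT ?_
      filter_upwards [eventually_ge_atTop N] with l hl
      have hD : SD (u k) (u l) + M.toDist.dist (u k).1 (u l).1 < ε := hN k hk l hl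
      have hMnn := Mnn (u k).1 (u l).1
      have hSDlt : SD (u k) (u l) < ε := by linarith
      exact (dist_le_sup (u k).2 (u l).2 n).trans hSDlt.le
    have hfc : f ∈ c0 hinv := by
      rw [mem_c0, Metric.tendsto_atTop]
      intro ε hε
      obtain ⟨N₁, hN₁⟩ := key (ε / 3) (by linarith)
      obtain ⟨N₂, hN₂⟩ := Metric.tendsto_atTop.1 (u N₁).2 (ε / 3) (by linarith)
      refine ⟨N₂, fun n hn => ?_⟩
      have h1 : dist ((u N₁).1 n) 1 < ε / 3 := by
        have := hN₂ n hn
        rwa [Real.dist_eq, sub_zero, abs_of_nonneg dist_nonneg] at this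
      have h2 : dist (f n) ((u N₁).1 n) ≤ ε / 3 := by
        rw [dist_comm]; exact hN₁ N₁ le_rfl n
      rw [Real.dist_eq, sub_zero, abs_of_nonneg dist_nonneg]
      calc dist (f n) 1 ≤ dist (f n) ((u N₁).1 n) + dist ((u N₁).1 n) 1 := dist_triangle _ _ _
        _ < ε := by linarith
    refine ⟨⟨f, hfc⟩, ?_⟩
    refine (@tendsto_iff_dist_tendsto_zero _ _ D.toPseudoMetricSpace _ _ _).2 ?_
    have hSD0 : Tendsto (fun k => SD (u k) ⟨f, hfc⟩) atTop (𝓝 0) := by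
      rw [Metric.tendsto_atTop]
      intro ε hε
      obtain ⟨N, hN⟩ := key (ε / 2) (half_pos hε)
      refine ⟨N, fun k hk => ?_⟩
      rw [Real.dist_eq, sub_zero, abs_of_nonneg (SD_nonneg _ _)]
      exact lt_of_le_of_lt (sup_le fun n => hN k hk n) (half_lt_self hε)
    show Tendsto (fun k => SD (u k) ⟨f, hfc⟩ + M.toDist.dist (u k).1 f) atTop (𝓝 0)
    simpa using hSD0.add hMd
  exact ⟨D, htop, hDc⟩

theorem polish [∀ n, PolishSpace (G' n)] :
    @PolishSpace (c0 hinv) (supMetric hinv).toUniformSpace.toTopologicalSpace := by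
  have hsep := separable hinv
  have hsc : @SecondCountableTopology (c0 hinv)
      (supMetric hinv).toUniformSpace.toTopologicalSpace :=
    @UniformSpace.secondCountable_of_separable _ (supMetric hinv).toUniformSpace
      (@EMetric.instIsCountablyGeneratedUniformity _
        (supMetric hinv).toPseudoMetricSpace.toPseudoEMetricSpace) hsep
  obtain ⟨D, hDt, hDc⟩ := exists_completeMetric hinv
  exact @PolishSpace.mk _ (supMetric hinv).toUniformSpace.toTopologicalSpace hsc
    (@TopologicalSpace.IsCompletelyMetrizableSpace.mk _ (supMetric hinv).toUniformSpace.toTopologicalSpace ⟨D, hDt, hDc⟩)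

end Stmt5Aux

open Stmt5Aux in
/-- Let `Gₙ` be Polish groups with compatible invariant metrics `dₙ`.  Then
`c₀(Gₙ,dₙ) = {g ∈ ∏ₙ Gₙ : dₙ(g(n),e) → 0}`, with the supremum metric
`d_s(g,h) = supₙ dₙ(g(n),h(n))`, is a Polish group. -/
theorem stmt5 (G' : ℕ → Type*) [∀ n, Group (G' n)] [∀ n, MetricSpace (G' n)]
    [∀ n, IsTopologicalGroup (G' n)] [∀ n, PolishSpace (G' n)]
    (hinv : ∀ (n : ℕ) (g x y : G' n),
      dist (g * x) (g * y) = dist x y ∧ dist (x * g) (y * g) = dist x y) :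
    ∃ S : Subgroup (∀ n, G' n),
      (S : Set (∀ n, G' n)) =
        {g : ∀ n, G' n | Tendsto (fun n => dist (g n) (1 : G' n)) atTop (𝓝 0)} ∧
      ∃ m : MetricSpace S,
        (∀ g h : S,
          m.toDist.dist g h = ⨆ n, dist ((g : ∀ k, G' k) n) ((h : ∀ k, G' k) n)) ∧
        @PolishSpace S m.toUniformSpace.toTopologicalSpace ∧
        @IsTopologicalGroup S m.toUniformSpace.toTopologicalSpace _ :=
  ⟨c0 hinv, rfl, supMetric hinv, fun _ _ => rfl, polish hinv, topGroup hinv⟩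
end

section
/- Let G be an abelian quasi-torsion Polish group with compatible invariant metric d, and let Hₙ (n ∈ ℕ) be closed subgroups of G such that: (1) diam(Hₙ) → 0, (2) each Hₙ is a pro-πₙ group for some set of primes πₙ, and (3) πₙ ∩ πₙ' = ∅ whenever n ≠ n'. Then the closure of the internal direct sum ⊕ₙ Hₙ in G is topologically isomorphic to the product ∏ₙ Hₙ, via the map sending (hₙ) to the convergent sum Σₙ hₙ. -/
open Topology Filter DirectSum

/-- A representation of `G` as a quasi-countable group: a topological-group closed
embedding of `G` into a countable product of countable discrete groups, with all
coordinate projections surjective. -/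
structure QuasiRep (G : Type*) [AddCommGroup G] [TopologicalSpace G] where
  /-- the countable discrete coordinate groups -/
  A : ℕ → Type
  [addgrp : ∀ n, AddCommGroup (A n)]
  [cnt : ∀ n, Countable (A n)]
  [top : ∀ n, TopologicalSpace (A n)]
  [disc : ∀ n, DiscreteTopology (A n)]
  /-- the embedding of `G` into the product -/
  e : G →+ ∀ n, A n
  emb : IsClosedEmbedding e
  surj : ∀ n, Function.Surjective fun x => e x n

attribute [instance] QuasiRep.addgrp QuasiRep.cnt QuasiRep.top QuasiRep.disc

/-- `G` is quasi-countable: a closed subgroup of a countable product of countable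
discrete groups with surjective coordinate projections. -/
def QuasiCountable (G : Type*) [AddCommGroup G] [TopologicalSpace G] : Prop :=
  Nonempty (QuasiRep G)

/-- `G` is quasi-torsion: quasi-countable with torsion coordinate groups. -/
def QuasiTorsion (G : Type*) [AddCommGroup G] [TopologicalSpace G] : Prop :=
  ∃ r : QuasiRep G, ∀ n, AddMonoid.IsTorsion (r.A n)

/-- An abelian group is a dsc group (direct sum of finite cyclic groups). -/
def IsDSC (A : Type*) [AddCommGroup A] : Prop :=
  ∃ f : ℕ → ℕ, (∀ i, 0 < f i) ∧ Nonempty ((⨁ i, ZMod (f i)) ≃+ A)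

/-- An abelian group is divisible. -/
def IsDivisibleGroup (A : Type*) [AddCommGroup A] : Prop :=
  ∀ n : ℤ, n ≠ 0 → Function.Surjective fun a : A => n • a

/-- `G` is quasi-dsc: quasi-countable with dsc coordinate groups. -/
def QuasiDsc (G : Type*) [AddCommGroup G] [TopologicalSpace G] : Prop :=
  ∃ r : QuasiRep G, ∀ n, IsDSC (r.A n)

/-- `G` is quasi-divisible: quasi-countable with divisible coordinate groups. -/
def QuasiDivisible (G : Type*) [AddCommGroup G] [TopologicalSpace G] : Prop :=
  ∃ r : QuasiRep G, ∀ n, IsDivisibleGroup (r.A n)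

/-- `G` is quasi-p: quasi-countable with `p`-group coordinate groups. -/
def QuasiP (G : Type*) [AddCommGroup G] [TopologicalSpace G] (p : ℕ) : Prop :=
  ∃ r : QuasiRep G, ∀ n, ∀ a : r.A n, ∃ k : ℕ, (p ^ k : ℕ) • a = 0

/-- A compact subgroup `H` is pro-π: every finite continuous quotient of `H` has order
whose prime divisors lie in `π`. -/
def IsProPi {G : Type*} [AddCommGroup G] [TopologicalSpace G] (H : AddSubgroup G)
    (π : Set ℕ) : Prop :=
  IsCompact (H : Set G) ∧
    ∀ N : AddSubgroup G, IsOpen (N : Set G) →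
      ∀ p : ℕ, p.Prime → p ∣ Nat.card (↥H ⧸ N.addSubgroupOf H) → p ∈ π


lemma sum_eq_zero_coprime_orders {A : Type*} [AddCommGroup A] {s : Finset ℕ} {a : ℕ → A}
    (hcop : ∀ m ∈ s, ∀ n ∈ s, m ≠ n → Nat.Coprime (addOrderOf (a m)) (addOrderOf (a n)))
    (hsum : ∑ n ∈ s, a n = 0) : ∀ n ∈ s, a n = 0 := by
  intro i hi
  set N : ℕ := ∏ j ∈ s.erase i, addOrderOf (a j) with hN
  have h1 : N • a i = 0 := by
    have h2 : N • (∑ n ∈ s, a n) = 0 := by rw [hsum, smul_zero]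
    rw [Finset.smul_sum, ← Finset.add_sum_erase _ _ hi] at h2
    have h3 : ∀ j ∈ s.erase i, N • a j = 0 := fun j hj =>
      addOrderOf_dvd_iff_nsmul_eq_zero.mp (Finset.dvd_prod_of_mem _ hj)
    rwa [Finset.sum_congr rfl h3, Finset.sum_const_zero, add_zero] at h2
  have h4 : addOrderOf (a i) ∣ N := addOrderOf_dvd_iff_nsmul_eq_zero.mpr h1
  have h5 : Nat.Coprime (addOrderOf (a i)) N :=
    Nat.Coprime.prod_right fun j hj =>
      hcop i hi j (Finset.mem_of_mem_erase hj) (Finset.ne_of_mem_erase hj).symm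
  exact AddMonoid.addOrderOf_eq_one_iff.mp (h5.eq_one_of_dvd h4)

/-- In an abelian quasi-torsion Polish group with a compatible invariant metric, if
`Hₙ` are closed subgroups with `diam Hₙ → 0`, each `Hₙ` pro-πₙ with pairwise disjoint
sets of primes `πₙ`, then the closure of `⊕ₙ Hₙ` is topologically isomorphic to
`∏ₙ Hₙ` via `(hₙ) ↦ Σₙ hₙ`. -/
theorem stmt6 {G : Type*} [AddCommGroup G] [MetricSpace G] [IsTopologicalAddGroup G]
    [PolishSpace G]
    (hd : ∀ g x y : G, dist (g + x) (g + y) = dist x y)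
    (hqt : QuasiTorsion G)
    (H : ℕ → AddSubgroup G) (hcl : ∀ n, IsClosed (H n : Set G))
    (hdiam : Tendsto (fun n => Metric.diam (H n : Set G)) atTop (𝓝 0))
    (π : ℕ → Set ℕ) (hpro : ∀ n, IsProPi (H n) (π n))
    (hdisj : ∀ n n', n ≠ n' → π n ∩ π n' = ∅) :
    (∀ x y : (∀ n, H n),
        (∑' n, ((x + y) n : G)) = (∑' n, (x n : G)) + ∑' n, (y n : G)) ∧
    IsClosedEmbedding (fun x : (∀ n, H n) => ∑' n, (x n : G)) ∧
    Set.range (fun x : (∀ n, H n) => ∑' n, (x n : G)) =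
      closure ((⨆ n, H n : AddSubgroup G) : Set G) := by
  classical
  obtain ⟨r, htor⟩ := hqt
  set e := r.e with he
  have hcomp : ∀ n, IsCompact ((H n : Set G)) := fun n => (hpro n).1
  haveI : ∀ n, CompactSpace (H n) := fun n => isCompact_iff_compactSpace.mp (hcomp n)
  set f : ∀ m, G →+ r.A m := fun m => (Pi.evalAddMonoidHom r.A m).comp e with hfdef
  have hfc : ∀ m, Continuous (f m) := fun m => (continuous_apply m).comp r.emb.continuous
  have hkero : ∀ m, IsOpen ((f m) ⁻¹' {0}) := fun m =>
    (isOpen_discrete ({0} : Set (r.A m))).preimage (hfc m)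
  -- eventual vanishing of each coordinate on `H n`
  have K1 : ∀ m, ∃ N : ℕ, ∀ n, N ≤ n → ∀ g ∈ H n, f m g = 0 := by
    intro m
    obtain ⟨ε, hε, hball⟩ := Metric.isOpen_iff.mp (hkero m) 0 (by simp)
    have hev : ∀ᶠ n in atTop, Metric.diam (H n : Set G) < ε :=
      hdiam.eventually (eventually_lt_nhds hε)
    obtain ⟨N, hN⟩ := eventually_atTop.mp hev
    refine ⟨N, fun n hn g hg => ?_⟩
    have hdist : dist g 0 ≤ Metric.diam (H n : Set G) := by
      rw [dist_comm]
      exact Metric.dist_le_diam_of_mem (hcomp n).isBounded (H n).zero_mem hg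
    have : g ∈ Metric.ball (0 : G) ε := lt_of_le_of_lt hdist (hN n hn)
    simpa using hball this
  choose Nf hNf using K1
  -- the coordinatewise limit
  set c : (∀ n, H n) → ∀ m, r.A m :=
    fun x m => ∑ n ∈ Finset.range (Nf m), f m ((x n : G)) with hcdef
  have hc : ∀ x : (∀ n, H n), HasSum (fun n => e ((x n : G))) (c x) := by
    intro x
    rw [Pi.hasSum]
    intro m
    exact hasSum_sum_of_ne_finset_zero fun n hn =>
      hNf m n (le_of_not_gt fun h => hn (Finset.mem_range.mpr h)) _ (x n).2
  -- summability and identification of the sum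
  have hsum : ∀ x : (∀ n, H n),
      HasSum (fun n => ((x n : G))) (∑' n, ((x n : G))) ∧ e (∑' n, ((x n : G))) = c x := by
    intro x
    have htend : Tendsto (fun F : Finset ℕ => ∑ n ∈ F, e ((x n : G))) atTop (𝓝 (c x)) := hc x
    have hmem : c x ∈ Set.range e := by
      refine r.emb.isClosed_range.mem_of_tendsto htend (Eventually.of_forall fun F => ?_)
      exact ⟨∑ n ∈ F, ((x n : G)), map_sum e _ F⟩
    obtain ⟨g, hg⟩ := hmem
    have hgs : HasSum (fun n => ((x n : G))) g := by
      have ht : Tendsto (fun F : Finset ℕ => ∑ n ∈ F, ((x n : G))) atTop (𝓝 g) := by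
        rw [r.emb.toIsEmbedding.toIsInducing.tendsto_nhds_iff]
        have hco : (e ∘ fun F : Finset ℕ => ∑ n ∈ F, ((x n : G))) =
            fun F : Finset ℕ => ∑ n ∈ F, e ((x n : G)) := by
          funext F; exact map_sum e _ F
        rw [hco, hg]
        exact htend
      exact ht
    exact ⟨hgs.tsum_eq ▸ hgs, by rw [hgs.tsum_eq, hg]⟩
  -- additivity
  have hadd : ∀ x y : (∀ n, H n),
      (∑' n, ((x + y) n : G)) = (∑' n, (x n : G)) + ∑' n, (y n : G) := by
    intro x y
    have hxy : HasSum (fun n => ((x + y) n : G)) ((∑' n, (x n : G)) + ∑' n, (y n : G)) := by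
      have h2 := ((hsum x).1).add ((hsum y).1)
      convert h2 using 1
      rfl
    exact hxy.tsum_eq
  -- the prime bound on coordinatewise orders
  have K2 : ∀ n m (g : G), g ∈ H n → ∀ p : ℕ, p.Prime → p ∣ addOrderOf (f m g) → p ∈ π n := by
    intro n m g hg p hp hpd
    set φ : (H n) →+ r.A m := (f m).domRestrict (H n) with hφ
    have hranfin : (Set.range φ).Finite := by
      have himg : Set.range φ = f m '' (H n : Set G) := by
        ext a
        constructor
        · rintro ⟨⟨g', hg'⟩, rfl⟩; exact ⟨g', hg', rfl⟩
        · rintro ⟨g', hg', rfl⟩; exact ⟨⟨g', hg'⟩, rfl⟩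
      rw [himg]
      exact ((hcomp n).image (hfc m)).finite ⟨by infer_instance⟩
    haveI : Finite φ.range := hranfin.to_subtype
    have horder : addOrderOf (f m g) ∣ Nat.card φ.range := by
      have hmem : f m g ∈ φ.range := ⟨⟨g, hg⟩, rfl⟩
      have hdd := addOrderOf_dvd_natCard (⟨f m g, hmem⟩ : φ.range)
      rwa [AddSubgroup.addOrderOf_mk] at hdd
    have hcard : Nat.card φ.range = Nat.card (↥(H n) ⧸ ((f m).ker).addSubgroupOf (H n)) := by
      have hkr : φ.ker = ((f m).ker).addSubgroupOf (H n) := rfl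
      calc Nat.card φ.range = Nat.card (↥(H n) ⧸ φ.ker) :=
            (Nat.card_congr (QuotientAddGroup.quotientKerEquivRange φ).toEquiv).symm
        _ = _ := by rw [hkr]
    exact (hpro n).2 (f m).ker (hkero m) p hp (hpd.trans (hcard ▸ horder))
  -- injectivity at zero
  have hinj0 : ∀ x : (∀ n, H n), (∑' n, ((x n : G))) = 0 → x = 0 := by
    intro x hx0
    have h1 : c x = 0 := by
      have h2 := (hsum x).2
      rw [hx0, map_zero] at h2
      exact h2.symm
    funext n
    have hzero : ∀ m, f m ((x n : G)) = 0 := by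
      intro m
      by_cases hn : n ∈ Finset.range (Nf m)
      · have hcm : ∑ k ∈ Finset.range (Nf m), f m ((x k : G)) = 0 := congrFun h1 m
        refine sum_eq_zero_coprime_orders (a := fun k => f m ((x k : G))) ?_ hcm n hn
        intro i _ j _ hij
        by_contra hnc
        obtain ⟨p, hp, hd1, hd2⟩ := Nat.Prime.not_coprime_iff_dvd.mp hnc
        have hpi : p ∈ π i := K2 i m _ (x i).2 p hp hd1
        have hpj : p ∈ π j := K2 j m _ (x j).2 p hp hd2
        have hdj := hdisj i j hij
        exact absurd (Set.mem_inter hpi hpj) (by rw [hdj]; exact Set.notMem_empty p)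
      · exact hNf m n (le_of_not_gt fun h => hn (Finset.mem_range.mpr h)) _ (x n).2
    have hxe : e ((x n : G)) = e 0 := by
      rw [map_zero]; funext m; exact hzero m
    have hx0' : ((x n : G)) = 0 := r.emb.injective hxe
    exact Subtype.ext (by simpa using hx0')
  -- injectivity
  have hinj : Function.Injective (fun x : (∀ n, H n) => ∑' n, ((x n : G))) := by
    intro x y hxy
    have hxy' : (∑' n, (x n : G)) = ∑' n, (y n : G) := hxy
    have h1 := hadd (x - y) y
    rw [sub_add_cancel, hxy'] at h1
    have h0 : (∑' n, (((x - y) n : G))) = 0 := right_eq_add.mp h1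
    have := hinj0 _ h0
    exact sub_eq_zero.mp this
  -- continuity
  have hcont : Continuous (fun x : (∀ n, H n) => ∑' n, ((x n : G))) := by
    rw [r.emb.toIsEmbedding.toIsInducing.continuous_iff]
    have hco : (e ∘ fun x : (∀ n, H n) => ∑' n, ((x n : G))) = c := by
      funext x; exact (hsum x).2
    rw [hco]
    refine continuous_pi fun m => ?_
    refine continuous_finset_sum _ fun n _ => ?_
    exact (hfc m).comp (continuous_subtype_val.comp (continuous_apply n))
  have hclemb : IsClosedEmbedding (fun x : (∀ n, H n) => ∑' n, ((x n : G))) :=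
    hcont.isClosedEmbedding hinj
  refine ⟨hadd, hclemb, ?_⟩
  apply Set.Subset.antisymm
  · rintro _ ⟨x, rfl⟩
    refine mem_closure_of_tendsto (hsum x).1 (Eventually.of_forall fun F => ?_)
    exact AddSubgroup.sum_mem _ fun n _ => (le_iSup H n) (x n).2
  · refine closure_minimal ?_ hclemb.isClosed_range
    intro g hg
    refine AddSubgroup.iSup_induction
      (C := fun g => g ∈ Set.range fun x : (∀ n, H n) => ∑' n, ((x n : G))) H hg ?_ ?_ ?_
    · intro n g hgn
      set x₀ : ∀ k, H k := Pi.single n ⟨g, hgn⟩ with hx₀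
      refine ⟨x₀, ?_⟩
      have hss : HasSum (fun k => ((x₀ k : G))) g := by
        have hfun : (fun k => ((x₀ k : G))) =
            fun k => if k = n then g else 0 := by
          funext k
          by_cases hk : k = n
          · subst hk; simp [hx₀]
          · simp [hx₀, Pi.single_eq_of_ne hk, hk]
        rw [hfun]
        exact hasSum_ite_eq n g
      exact hss.tsum_eq
    · exact ⟨0, by simp⟩
    · rintro a b ⟨x, rfl⟩ ⟨y, rfl⟩
      exact ⟨x + y, hadd x y⟩
end

section
/- Let G be an abelian quasi-countable Polish group such that every neighborhood of 0 contains an element generating an infinite discrete subgroup. If G is not locally compact, then there exist infinite discrete groups Lₙ (n ∈ ℕ) such that ∏ₙ Lₙ embeds as a closed subgroup of G. -/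
open Topology Filter DirectSum

section Aux

set_option linter.unusedSectionVars false

variable {G : Type*} [AddCommGroup G] [TopologicalSpace G] [IsTopologicalAddGroup G]
  (r : QuasiRep G)

/-- Cylinder sets in the product are open. -/
lemma cyl_open (z : ∀ n, r.A n) (m : ℕ) : IsOpen {w : ∀ n, r.A n | ∀ i < m, w i = z i} := by
  have : {w : ∀ n, r.A n | ∀ i < m, w i = z i}
      = ⋂ i ∈ Finset.range m, (fun w : ∀ n, r.A n => w i) ⁻¹' {z i} := by
    ext w; simp only [Set.mem_setOf_eq, Set.mem_iInter, Finset.mem_range, Set.mem_preimage,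
      Set.mem_singleton_iff]
  rw [this]
  exact isOpen_biInter_finset fun i _ =>
    (continuous_apply i).isOpen_preimage _ (isOpen_discrete _)

/-- The basic open subgroup-like neighborhoods of `0`. -/
def QuasiRep.V (m : ℕ) : Set G := {g | ∀ i < m, r.e g i = 0}

lemma V_mem_nhds (m : ℕ) : r.V m ∈ 𝓝 (0 : G) := by
  have ho : IsOpen (r.V m) := by
    have : r.V m = r.e ⁻¹' {w | ∀ i < m, w i = 0} := rfl
    rw [this]
    exact (cyl_open r 0 m).preimage r.emb.continuous
  exact ho.mem_nhds (by intro i _; simp [QuasiRep.V])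

lemma V_antitone {m m' : ℕ} (h : m ≤ m') : r.V m' ⊆ r.V m :=
  fun g hg i hi => hg i (lt_of_lt_of_le hi h)

lemma V_basis {U : Set G} (hU : U ∈ 𝓝 (0 : G)) : ∃ m, r.V m ⊆ U := by
  have h0 : 𝓝 (0 : G) = comap r.e (𝓝 (r.e 0)) := r.emb.toIsInducing.nhds_eq_comap 0
  rw [h0, map_zero] at hU
  obtain ⟨t, ht, hts⟩ := hU
  rw [nhds_pi] at ht
  obtain ⟨I, hI, Vv, hVv, hsub⟩ := Filter.mem_pi.1 ht
  obtain ⟨m, hm⟩ := hI.bddAbove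
  refine ⟨m + 1, fun g hg => hts ?_⟩
  refine hsub fun i hi => ?_
  have : r.e g i = 0 := hg i (Nat.lt_succ_of_le (hm hi))
  rw [this]
  have := hVv i
  simp only [nhds_discrete, Filter.mem_pure] at this
  simpa using this

lemma zmul_mem_V {g : G} {m : ℕ} (hg : g ∈ r.V m) {x : G}
    (hx : x ∈ AddSubgroup.zmultiples g) : x ∈ r.V m := by
  obtain ⟨z, rfl⟩ := AddSubgroup.mem_zmultiples_iff.1 hx
  intro i hi
  have : r.e (z • g) = z • r.e g := map_zsmul r.e z g
  rw [this, Pi.smul_apply, hg i hi, smul_zero]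

lemma exists_good
    (hgen : ∀ U ∈ 𝓝 (0 : G), ∃ g ∈ U,
      Infinite (AddSubgroup.zmultiples g) ∧ DiscreteTopology (AddSubgroup.zmultiples g))
    (n : ℕ) :
    ∃ p : G × ℕ, n < p.2 ∧ p.1 ∈ r.V n ∧ Infinite (AddSubgroup.zmultiples p.1) ∧
      DiscreteTopology (AddSubgroup.zmultiples p.1) ∧
      ∀ x ∈ AddSubgroup.zmultiples p.1, x ∈ r.V p.2 → x = 0 := by
  obtain ⟨g, hgV, hinf, hdisc⟩ := hgen (r.V n) (V_mem_nhds r n)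
  have hopen : IsOpen ({(⟨0, (AddSubgroup.zmultiples g).zero_mem⟩ : AddSubgroup.zmultiples g)} :
      Set (AddSubgroup.zmultiples g)) := isOpen_discrete _
  obtain ⟨U, hUo, hUe⟩ := isOpen_induced_iff.1 hopen
  have hU0 : U ∈ 𝓝 (0 : G) := hUo.mem_nhds (by
    have : (⟨0, (AddSubgroup.zmultiples g).zero_mem⟩ : AddSubgroup.zmultiples g) ∈
        Subtype.val ⁻¹' U := by rw [hUe]; rfl
    exact this)
  obtain ⟨m', hm'⟩ := V_basis r hU0
  refine ⟨(g, max m' (n + 1)), lt_of_lt_of_le (Nat.lt_succ_self n) (le_max_right _ _),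
    hgV, hinf, hdisc, fun x hx hxV => ?_⟩
  have hxU : x ∈ U := hm' (V_antitone r (le_max_left _ _) hxV)
  have : (⟨x, hx⟩ : AddSubgroup.zmultiples g) ∈ Subtype.val ⁻¹' U := hxU
  rw [hUe] at this
  simpa using congrArg Subtype.val this

variable (hgen : ∀ U ∈ 𝓝 (0 : G), ∃ g ∈ U,
      Infinite (AddSubgroup.zmultiples g) ∧ DiscreteTopology (AddSubgroup.zmultiples g))

noncomputable def pick (n : ℕ) : G × ℕ := (exists_good r hgen n).choose

noncomputable def nseq : ℕ → ℕ
  | 0 => 0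
  | k + 1 => (pick r hgen (nseq k)).2

noncomputable def gseq (k : ℕ) : G := (pick r hgen (nseq r hgen k)).1

lemma nseq_lt (k : ℕ) : nseq r hgen k < nseq r hgen (k + 1) :=
  (exists_good r hgen (nseq r hgen k)).choose_spec.1

lemma nseq_mono : StrictMono (nseq r hgen) := strictMono_nat_of_lt_succ (nseq_lt r hgen)

lemma le_nseq (k : ℕ) : k ≤ nseq r hgen k := by
  induction k with
  | zero => exact Nat.zero_le _
  | succ k ih => exact Nat.succ_le_of_lt (lt_of_le_of_lt ih (nseq_lt r hgen k))

lemma gseq_mem (k : ℕ) : gseq r hgen k ∈ r.V (nseq r hgen k) :=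
  (exists_good r hgen (nseq r hgen k)).choose_spec.2.1

lemma gseq_inf (k : ℕ) : Infinite (AddSubgroup.zmultiples (gseq r hgen k)) :=
  (exists_good r hgen (nseq r hgen k)).choose_spec.2.2.1

lemma gseq_disc (k : ℕ) : DiscreteTopology (AddSubgroup.zmultiples (gseq r hgen k)) :=
  (exists_good r hgen (nseq r hgen k)).choose_spec.2.2.2.1

lemma gseq_sep (k : ℕ) : ∀ x ∈ AddSubgroup.zmultiples (gseq r hgen k),
    x ∈ r.V (nseq r hgen (k + 1)) → x = 0 :=
  (exists_good r hgen (nseq r hgen k)).choose_spec.2.2.2.2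

end Aux

/-- If an abelian quasi-countable Polish group `G` is not locally compact and every
neighborhood of `0` contains an element generating an infinite discrete subgroup, then
there are infinite discrete groups `Lₙ` whose product embeds as a closed subgroup
of `G`. -/
theorem stmt9 {G : Type*} [AddCommGroup G] [TopologicalSpace G] [IsTopologicalAddGroup G]
    [PolishSpace G] (hqc : QuasiCountable G)
    (hgen : ∀ U ∈ 𝓝 (0 : G), ∃ g ∈ U,
      Infinite (AddSubgroup.zmultiples g) ∧ DiscreteTopology (AddSubgroup.zmultiples g))
    (hnlc : ¬ LocallyCompactSpace G) :
    ∃ L : ℕ → AddSubgroup G,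
      (∀ n, Infinite (L n)) ∧ (∀ n, DiscreteTopology (L n)) ∧
      ∃ f : (∀ n, L n) → G,
        (∀ x y, f (x + y) = f x + f y) ∧ IsClosedEmbedding f := by
  obtain ⟨r⟩ := hqc
  set N : ℕ → ℕ := nseq r hgen with hN
  set g : ℕ → G := gseq r hgen with hg
  set L : ℕ → AddSubgroup G := fun k => AddSubgroup.zmultiples (g k) with hL
  -- every element of `L k` vanishes in coordinates below `N k`
  have hLV : ∀ k, ∀ x : L k, ∀ i < N k, r.e (x : G) i = 0 := fun k x =>
    zmul_mem_V r (gseq_mem r hgen k) x.2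
  -- the candidate image element in the product
  set y : (∀ k, L k) → ∀ i, r.A i :=
    fun x i => ∑ k ∈ Finset.range (i + 1), r.e (x k : G) i with hy
  -- `y` computed with any long enough partial sum
  have hyM : ∀ (x : ∀ k, L k) (i M : ℕ), i + 1 ≤ M →
      y x i = ∑ k ∈ Finset.range M, r.e (x k : G) i := by
    intro x i M hM
    simp only [hy]
    refine (Finset.sum_subset (f := fun k => r.e ((x k : G)) i) (Finset.range_subset_range.2 hM) ?_)
    intro k _ hk
    rw [Finset.mem_range, not_lt] at hk
    exact hLV k (x k) i (lt_of_lt_of_le (Nat.lt_of_succ_le hk) (le_nseq r hgen k))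
  -- `y` is additive
  have hyadd : ∀ x x' : ∀ k, L k, y (x + x') = y x + y x' := by
    intro x x'
    funext i
    simp only [hy, Pi.add_apply]
    rw [← Finset.sum_add_distrib]
    refine Finset.sum_congr rfl fun k _ => ?_
    show r.e ((x k + x' k : L k) : G) i = _
    rw [AddSubgroup.coe_add, map_add]
    rfl
  -- key recovery lemma
  have hrec : ∀ (K : ℕ) (x x' : ∀ k, L k),
      (∀ i < N K, y x i = y x' i) → ∀ k < K, x k = x' k := by
    intro K
    induction K with
    | zero => intro x x' _ k hk; exact absurd hk (Nat.not_lt_zero k)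
    | succ K ih =>
      intro x x' hxy k hk
      have hNle : N K ≤ N (K + 1) := le_of_lt (nseq_lt r hgen K)
      have hprev : ∀ k < K, x k = x' k :=
        ih x x' fun i hi => hxy i (lt_of_lt_of_le hi hNle)
      have hlast : x K = x' K := by
        have hd : ((x K : G) - (x' K : G)) ∈ L K := (L K).sub_mem (x K).2 (x' K).2
        have hdV : ((x K : G) - (x' K : G)) ∈ r.V (N (K + 1)) := by
          intro i hi
          set M : ℕ := max (i + 1) (K + 1) with hM
          have hiM : i + 1 ≤ M := le_max_left _ _
          have hKM : K < M := lt_of_lt_of_le (Nat.lt_succ_self K) (le_max_right _ _)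
          have hsum : ∑ j ∈ Finset.range M,
              (r.e (x j : G) i - r.e (x' j : G) i)
              = r.e (x K : G) i - r.e (x' K : G) i := by
            refine Finset.sum_eq_single_of_mem K (Finset.mem_range.2 hKM) ?_
            intro j _ hj
            rcases lt_or_gt_of_ne hj with hjK | hjK
            · rw [hprev j hjK, sub_self]
            · have h1 : r.e (x j : G) i = 0 := hLV j (x j) i
                (lt_of_lt_of_le hi ((nseq_mono r hgen).monotone hjK))
              have h2 : r.e (x' j : G) i = 0 := hLV j (x' j) i
                (lt_of_lt_of_le hi ((nseq_mono r hgen).monotone hjK))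
              rw [h1, h2, sub_self]
          calc r.e ((x K : G) - (x' K : G)) i
              = r.e (x K : G) i - r.e (x' K : G) i := by rw [map_sub]; rfl
            _ = ∑ j ∈ Finset.range M, (r.e (x j : G) i - r.e (x' j : G) i) := hsum.symm
            _ = (∑ j ∈ Finset.range M, r.e (x j : G) i)
                - ∑ j ∈ Finset.range M, r.e (x' j : G) i := Finset.sum_sub_distrib _ _
            _ = y x i - y x' i := by rw [hyM x i M hiM, hyM x' i M hiM]
            _ = 0 := by rw [hxy i hi, sub_self]
        have := gseq_sep r hgen K _ hd hdV
        exact Subtype.ext (sub_eq_zero.1 this)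
      rcases Nat.lt_succ_iff_lt_or_eq.1 hk with hk' | hk'
      · exact hprev k hk'
      · rw [hk']; exact hlast
  -- `y` is injective
  have hyinj : Function.Injective y := by
    intro x x' h
    funext k
    exact hrec (k + 1) x x' (fun i _ => congrFun h i) k (Nat.lt_succ_self k)
  -- `y` is continuous
  have hycont : Continuous y := by
    refine continuous_pi fun i => ?_
    simp only [hy]
    exact continuous_finset_sum _ fun k _ =>
      (continuous_apply i).comp (r.emb.continuous.comp
        (continuous_subtype_val.comp (continuous_apply k)))
  -- `y x` lies in the closed range of `r.e`
  have hyrange : ∀ x : ∀ k, L k, ∃ gx : G, r.e gx = y x := by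
    intro x
    have hcl : IsClosed (Set.range r.e) := r.emb.isClosed_range
    have hmem : y x ∈ Set.range r.e := by
      rw [← hcl.closure_eq]
      refine mem_closure_of_tendsto
        (f := fun K => r.e (∑ k ∈ Finset.range K, ((x k : G)))) (b := atTop) ?_ ?_
      · rw [tendsto_pi_nhds]
        intro i
        refine Tendsto.congr' ?_ (tendsto_const_nhds (x := y x i))
        filter_upwards [eventually_ge_atTop (i + 1)] with K hK
        rw [map_sum, Finset.sum_apply]
        exact hyM x i K hK
      · exact Eventually.of_forall fun K => ⟨_, rfl⟩
    exact hmem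
  choose f hf using hyrange
  have einj : Function.Injective r.e := r.emb.injective
  have hfadd : ∀ x x' : ∀ k, L k, f (x + x') = f x + f x' := by
    intro x x'
    apply einj
    rw [hf, map_add, hf, hf, hyadd]
  have hfcont : Continuous f := by
    rw [r.emb.toIsInducing.continuous_iff]
    have : (r.e ∘ f) = y := funext hf
    rw [this]
    exact hycont
  -- `y` is inducing
  have hyind : IsInducing y := by
    rw [isInducing_iff_nhds]
    intro x
    refine le_antisymm ((hycont.tendsto x).le_comap) ?_
    intro s hs
    rw [nhds_pi] at hs
    obtain ⟨I, hIfin, W, hW, hsub⟩ := Filter.mem_pi.1 hs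
    obtain ⟨K, hK⟩ := hIfin.bddAbove
    rw [mem_comap]
    refine ⟨{w | ∀ i < N (K + 1), w i = y x i},
      (cyl_open r (y x) (N (K + 1))).mem_nhds (fun i _ => rfl), ?_⟩
    intro x' hx'
    have := hrec (K + 1) x' x (fun i hi => hx' i hi)
    refine hsub fun k hk => ?_
    rw [this k (Nat.lt_succ_of_le (hK hk))]
    exact mem_of_mem_nhds (hW k)
  -- the range of `y` is closed
  have hyclosed : IsClosed (Set.range y) := by
    refine isClosed_of_closure_subset fun z hz => ?_
    have hex : ∀ K : ℕ, ∃ x : ∀ k, L k, ∀ i < N (K + 1), y x i = z i := by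
      intro K
      have hto : {w : ∀ n, r.A n | ∀ i < N (K + 1), w i = z i} ∈ 𝓝 z :=
        (cyl_open r z _).mem_nhds (fun i _ => rfl)
      obtain ⟨w, hw1, hw2⟩ := mem_closure_iff_nhds.1 hz _ hto
      obtain ⟨x, rfl⟩ := hw2
      exact ⟨x, hw1⟩
    choose c hc using hex
    have hmono := (nseq_mono r hgen).monotone
    have hcons : ∀ k K K', k ≤ K → k ≤ K' → c K k = c K' k := by
      intro k K K' h1 h2
      refine hrec (k + 1) (c K) (c K') (fun i hi => ?_) k (Nat.lt_succ_self k)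
      rw [hc K i (lt_of_lt_of_le hi (hmono (Nat.succ_le_succ h1))),
        hc K' i (lt_of_lt_of_le hi (hmono (Nat.succ_le_succ h2)))]
    refine ⟨fun k => c k k, ?_⟩
    funext i
    have hiN : i < N (i + 1) := lt_of_lt_of_le (Nat.lt_succ_self i) (le_nseq r hgen (i + 1))
    rw [← hc i i hiN]
    simp only [hy]
    refine Finset.sum_congr rfl fun k hk => ?_
    rw [Finset.mem_range] at hk
    exact congrArg (fun t : L k => r.e (t : G) i) (hcons k k i le_rfl (Nat.lt_succ_iff.1 hk))
  have hyemb : IsEmbedding y := ⟨hyind, hyinj⟩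
  have hfemb : IsEmbedding f :=
    IsEmbedding.of_comp hfcont r.emb.continuous
      (by rw [show r.e ∘ f = y from funext hf]; exact hyemb)
  have hfrange : Set.range f = r.e ⁻¹' Set.range y := by
    ext a
    constructor
    · rintro ⟨x, rfl⟩
      exact ⟨x, (hf x).symm⟩
    · rintro ⟨x, hx⟩
      exact ⟨x, einj (by rw [hf]; exact hx)⟩
  have hfclosed : IsClosed (Set.range f) := by
    rw [hfrange]
    exact hyclosed.preimage r.emb.continuous
  exact ⟨L, fun n => gseq_inf r hgen n, fun n => gseq_disc r hgen n, f, hfadd,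
    ⟨hfemb, hfclosed⟩⟩
end

section
/- Let G be an abelian quasi-p Polish group and let g, g' ∈ G. If the closure of ⟨g⟩ intersects the (abstract) cyclic subgroup ⟨g'⟩ trivially, then the closure of ⟨g⟩ intersects the closure of ⟨g'⟩ trivially. -/
open Topology Filter DirectSum

section StmtAux

variable {p : ℕ} [Fact p.Prime]

/-- `toZModPow` is continuous (it is locally constant). -/
lemma stmt16_continuous_toZModPow (n : ℕ) :
    Continuous (PadicInt.toZModPow (p := p) n) := by
  rw [continuous_discrete_rng]
  intro b
  rw [isOpen_iff_mem_nhds]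
  intro x hx
  have hr : ((p : ℝ) ^ (-(n : ℤ)) : ℝ) ≠ 0 := by
    have : (0:ℝ) < (p:ℝ) := by exact_mod_cast (Fact.out : p.Prime).pos
    positivity
  have hopen : IsOpen (Metric.closedBall x ((p : ℝ) ^ (-(n : ℤ)))) :=
    IsUltrametricDist.isOpen_closedBall x hr
  refine Filter.mem_of_superset (hopen.mem_nhds (Metric.mem_closedBall_self ?_)) ?_
  · have : (0:ℝ) < (p:ℝ) := by exact_mod_cast (Fact.out : p.Prime).pos
    positivity
  · intro y hy
    simp only [Set.mem_preimage, Set.mem_singleton_iff] at hx ⊢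
    rw [← hx]
    have hmem : y - x ∈ Ideal.span {(p : ℤ_[p]) ^ n} := by
      rw [← PadicInt.norm_le_pow_iff_mem_span_pow]
      simpa [dist_eq_norm] using hy
    have h0 : PadicInt.toZModPow (p := p) n (y - x) = 0 := by
      rwa [← RingHom.mem_ker, PadicInt.ker_toZModPow]
    have := map_sub (PadicInt.toZModPow (p := p) n) y x
    rw [h0] at this
    exact (sub_eq_zero.mp this.symm)

/-- Any continuous image of a point of `ℤ_[p]` is in the closure of the images of
the integers. -/
lemma stmt16_mem_closure_range {Y : Type*} [TopologicalSpace Y] {f : ℤ_[p] → Y}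
    (hf : Continuous f) (α : ℤ_[p]) :
    f α ∈ closure (Set.range fun m : ℤ => f (m : ℤ_[p])) := by
  have h1 : f '' closure (Set.range (Int.cast : ℤ → ℤ_[p])) ⊆
      closure (f '' Set.range (Int.cast : ℤ → ℤ_[p])) :=
    image_closure_subset_closure_image hf
  have h2 : closure (Set.range (Int.cast : ℤ → ℤ_[p])) = Set.univ :=
    PadicInt.denseRange_intCast.closure_range
  have h3 : f '' Set.range (Int.cast : ℤ → ℤ_[p]) =
      Set.range fun m : ℤ => f (m : ℤ_[p]) := by
    rw [← Set.range_comp]; rfl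
  have : f α ∈ f '' closure (Set.range (Int.cast : ℤ → ℤ_[p])) := by
    rw [h2]; exact ⟨α, trivial, rfl⟩
  rw [← h3]
  exact h1 this

end StmtAux

/-- In an abelian quasi-p Polish group, if the closure of `⟨g⟩` meets `⟨g'⟩` trivially,
then it meets the closure of `⟨g'⟩` trivially. -/
theorem stmt16 {G : Type*} [AddCommGroup G] [TopologicalSpace G] [IsTopologicalAddGroup G]
    [PolishSpace G] (p : ℕ) (hp : p.Prime) (hqp : QuasiP G p) (g g' : G)
    (h : closure ((AddSubgroup.zmultiples g : AddSubgroup G) : Set G) ∩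
        ((AddSubgroup.zmultiples g' : AddSubgroup G) : Set G) = {0}) :
    closure ((AddSubgroup.zmultiples g : AddSubgroup G) : Set G) ∩
      closure ((AddSubgroup.zmultiples g' : AddSubgroup G) : Set G) = {0} := by
  haveI : Fact p.Prime := ⟨hp⟩
  obtain ⟨r, hA⟩ := hqp
  choose k hk using fun n => hA n (r.e g' n)
  have hz0 : ∀ n, (zmultiplesHom (r.A n) (r.e g' n)) ((p ^ k n : ℕ) : ℤ) = 0 := by
    intro n
    rw [zmultiplesHom_apply, natCast_zsmul]
    exact hk n
  set φ : ∀ n, ZMod (p ^ k n) →+ r.A n :=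
    fun n => ZMod.lift _ ⟨zmultiplesHom (r.A n) (r.e g' n), hz0 n⟩ with hφ
  set F : ℤ_[p] →+ ∀ n, r.A n :=
    { toFun := fun α n => φ n (PadicInt.toZModPow (k n) α)
      map_zero' := by funext n; simp
      map_add' := by intro a b; funext n; simp } with hFdef
  have hFm : ∀ m : ℤ, F (m : ℤ_[p]) = r.e (m • g') := by
    intro m
    funext n
    show φ n (PadicInt.toZModPow (k n) ((m : ℤ) : ℤ_[p])) = r.e (m • g') n
    rw [map_intCast, hφ]
    simp only [ZMod.lift_coe, zmultiplesHom_apply]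
    rw [map_zsmul]
    rfl
  have hFc : Continuous F := by
    apply continuous_pi
    intro n
    have hco : (fun a : ℤ_[p] => F a n) = (φ n) ∘ (PadicInt.toZModPow (k n)) := rfl
    rw [hco]
    exact Continuous.comp continuous_of_discreteTopology (stmt16_continuous_toZModPow (k n))
  set Z' : Set G := ((AddSubgroup.zmultiples g' : AddSubgroup G) : Set G) with hZ'
  set Cg : Set G := closure ((AddSubgroup.zmultiples g : AddSubgroup G) : Set G) with hCg
  have himg : r.e '' Z' ⊆ Set.range F := by
    rintro _ ⟨y, hy, rfl⟩
    obtain ⟨m, rfl⟩ := AddSubgroup.mem_zmultiples_iff.mp hy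
    exact ⟨(m : ℤ_[p]), hFm m⟩
  have hclosedF : IsClosed (Set.range F) := (isCompact_range hFc).isClosed
  have hsub : closure (r.e '' Z') ⊆ Set.range F := closure_minimal himg hclosedF
  apply Set.eq_singleton_iff_unique_mem.mpr
  constructor
  · exact ⟨subset_closure (AddSubgroup.zero_mem _), subset_closure (AddSubgroup.zero_mem _)⟩
  rintro x ⟨hxg, hxg'⟩
  have hex : r.e x ∈ Set.range F := by
    apply hsub
    rw [r.emb.closure_image_eq]
    exact ⟨x, hxg', rfl⟩
  obtain ⟨α, hα⟩ := hex
  by_cases h0 : α = 0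
  · apply r.emb.injective
    rw [← hα, h0, map_zero, map_zero]
  -- nonzero case
  set v := α.valuation with hv
  set u := PadicInt.unitCoeff h0 with hu
  have hαspec : α = (u : ℤ_[p]) * (p : ℤ_[p]) ^ v := PadicInt.unitCoeff_spec h0
  have hCgclosed : IsClosed (r.e '' Cg) := r.emb.isClosedMap _ isClosed_closure
  have hmul : ∀ m : ℤ, m • x ∈ Cg := by
    intro m
    have hx' : x ∈ (AddSubgroup.zmultiples g).topologicalClosure := hxg
    exact AddSubgroup.zsmul_mem _ hx' m
  have hFmul : ∀ m : ℤ, ∀ β : ℤ_[p], F ((m : ℤ_[p]) * β) = m • F β := by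
    intro m β
    rw [show ((m : ℤ_[p]) * β) = m • β from (zsmul_eq_mul β m).symm, map_zsmul]
  have step1 : F (((u⁻¹ : ℤ_[p]ˣ) : ℤ_[p]) * α) ∈ r.e '' Cg := by
    have hcont : Continuous (fun β : ℤ_[p] => F (β * α)) :=
      hFc.comp (continuous_id.mul continuous_const)
    have hmem := stmt16_mem_closure_range hcont ((u⁻¹ : ℤ_[p]ˣ) : ℤ_[p])
    have hr : Set.range (fun m : ℤ => F ((m : ℤ_[p]) * α)) ⊆ r.e '' Cg := by
      rintro _ ⟨m, rfl⟩
      show F ((m : ℤ_[p]) * α) ∈ ⇑r.e '' Cg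
      rw [hFmul, hα, ← map_zsmul]
      exact ⟨m • x, hmul m, rfl⟩
    exact closure_minimal hr hCgclosed hmem
  have huv : ((u⁻¹ : ℤ_[p]ˣ) : ℤ_[p]) * α = (p : ℤ_[p]) ^ v := by
    rw [hαspec, ← mul_assoc, ← Units.val_mul, inv_mul_cancel, Units.val_one, one_mul]
  have hpv : F ((p : ℤ_[p]) ^ v) = r.e ((p ^ v : ℤ) • g') := by
    rw [show ((p : ℤ_[p]) ^ v) = (((p ^ v : ℤ) : ℤ) : ℤ_[p]) by push_cast; ring, hFm]
  have hzero : (p ^ v : ℤ) • g' = 0 := by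
    have hmemCg : (p ^ v : ℤ) • g' ∈ Cg := by
      rw [huv, hpv] at step1
      obtain ⟨y, hy, hye⟩ := step1
      rwa [← r.emb.injective hye]
    have hmemZ' : (p ^ v : ℤ) • g' ∈ AddSubgroup.zmultiples g' :=
      AddSubgroup.zsmul_mem _ (AddSubgroup.mem_zmultiples g') _
    have : (p ^ v : ℤ) • g' ∈ ({(0 : G)} : Set G) := h ▸ ⟨hmemCg, hmemZ'⟩
    simpa using this
  have hFα : F α = 0 := by
    have hcont : Continuous (fun β : ℤ_[p] => F (β * (p : ℤ_[p]) ^ v)) :=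
      hFc.comp (continuous_id.mul continuous_const)
    have hmem := stmt16_mem_closure_range hcont ((u : ℤ_[p]ˣ) : ℤ_[p])
    have hr : Set.range (fun m : ℤ => F ((m : ℤ_[p]) * (p : ℤ_[p]) ^ v)) ⊆
        ({0} : Set (∀ n, r.A n)) := by
      rintro _ ⟨m, rfl⟩
      show F ((m : ℤ_[p]) * (p : ℤ_[p]) ^ v) ∈ ({0} : Set (∀ n, r.A n))
      rw [hFmul, hpv, hzero, map_zero, smul_zero]
      exact Set.mem_singleton _
    have h01 : F ((u : ℤ_[p]) * (p : ℤ_[p]) ^ v) ∈ closure ({0} : Set (∀ n, r.A n)) :=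
      closure_mono hr hmem
    rw [← hαspec] at h01
    simpa using h01
  apply r.emb.injective
  rw [← hα, hFα, map_zero]
end

section
/- Let G be an abelian quasi-p Polish group. Then either (1) there exists a closed pro-cyclic subgroup H ≤ G such that G/H contains a clopen subgroup of bounded exponent, or (2) the set D = {(g,g') ∈ G² : cl⟨g⟩ ∩ cl⟨g'⟩ = {0}} is comeager in G². -/
open Topology Filter DirectSum

/-! ### Auxiliary lemmas -/

section Helpers

open Set

set_option linter.unusedSectionVars false

/-- A nowhere dense set is meagre. -/
lemma aux_isNowhereDense_isMeagre {X : Type*} [TopologicalSpace X] {s : Set X}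
    (hs : IsNowhereDense s) : IsMeagre s := by
  rw [isMeagre_iff_countable_union_isNowhereDense]
  exact ⟨{s}, by simpa using hs, countable_singleton s, by simp⟩

lemma smul_congr_of_dvd {A : Type*} [AddCommGroup A] {a : A} {q : ℕ} (h0 : q • a = 0)
    {x y : ℤ} (hd : (q : ℤ) ∣ (x - y)) : x • a = y • a := by
  obtain ⟨d, hdd⟩ := hd
  have h1 : (x - y) • a = 0 := by
    rw [hdd, mul_comm, mul_smul, natCast_zsmul, h0, smul_zero]
  rw [sub_zsmul] at h1
  exact eq_of_sub_eq_zero (by rwa [sub_eq_add_neg])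

variable {G : Type*} [AddCommGroup G] [TopologicalSpace G] [IsTopologicalAddGroup G]

namespace QuasiRep

variable (r : QuasiRep G)

lemma isOpen_agree (N : ℕ) (c : ∀ n, r.A n) :
    IsOpen {g : G | ∀ n ≤ N, r.e g n = c n} := by
  have h : {g : G | ∀ n ≤ N, r.e g n = c n}
      = ⋂ n ∈ Finset.range (N + 1), (fun g : G => r.e g n) ⁻¹' {c n} := by
    ext g; simp [Nat.lt_succ_iff]
  rw [h]
  exact isOpen_biInter_finset fun n _ =>
    (isOpen_discrete _).preimage ((continuous_apply n).comp r.emb.continuous)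

lemma agree_mem_nhds (N : ℕ) (g₁ : G) :
    {g : G | ∀ n ≤ N, r.e g n = r.e g₁ n} ∈ 𝓝 g₁ :=
  (r.isOpen_agree N (r.e g₁)).mem_nhds (fun _ _ => rfl)

lemma exists_agree_subset {g₁ : G} {Q : Set G} (hQ : Q ∈ 𝓝 g₁) :
    ∃ N : ℕ, {g : G | ∀ n ≤ N, r.e g n = r.e g₁ n} ⊆ Q := by
  have h1 : 𝓝 g₁ = Filter.comap r.e (𝓝 (r.e g₁)) :=
    r.emb.toIsEmbedding.toIsInducing.nhds_eq_comap g₁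
  rw [h1, Filter.mem_comap] at hQ
  obtain ⟨T, hT, hTQ⟩ := hQ
  obtain ⟨U, hUT, hUo, hxU⟩ := mem_nhds_iff.mp hT
  obtain ⟨I, u, hIu, hsub⟩ := isOpen_pi_iff.mp hUo _ hxU
  refine ⟨I.sup id, fun g hg => hTQ ?_⟩
  refine Set.mem_preimage.mpr (hUT (hsub ?_))
  intro i hi
  have hgi : r.e g i = r.e g₁ i := hg i (Finset.le_sup (f := id) hi)
  rw [hgi]; exact (hIu i hi).2

lemma mem_closure_zmultiples_iff {g h : G} :
    h ∈ closure ((AddSubgroup.zmultiples g : AddSubgroup G) : Set G) ↔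
      ∀ N : ℕ, ∃ k : ℤ, ∀ n ≤ N, k • r.e g n = r.e h n := by
  constructor
  · intro hcl N
    have hB : {y : ∀ n, r.A n | ∀ n ≤ N, y n = r.e h n} ∈ 𝓝 (r.e h) := by
      have hop : IsOpen {y : ∀ n, r.A n | ∀ n ≤ N, y n = r.e h n} := by
        have h : {y : ∀ n, r.A n | ∀ n ≤ N, y n = r.e h n}
            = ⋂ n ∈ Finset.range (N + 1), (fun y : ∀ n, r.A n => y n) ⁻¹' {r.e h n} := by
          ext y; simp [Nat.lt_succ_iff]
        rw [h]
        exact isOpen_biInter_finset fun n _ =>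
          (isOpen_discrete _).preimage (continuous_apply n)
      exact hop.mem_nhds (fun _ _ => rfl)
    have hcl' : r.e h ∈ closure (r.e '' ((AddSubgroup.zmultiples g : AddSubgroup G) : Set G)) :=
      (image_closure_subset_closure_image r.emb.continuous) ⟨h, hcl, rfl⟩
    obtain ⟨y, hy1, hy2⟩ := mem_closure_iff_nhds.mp hcl' _ hB
    obtain ⟨x, hx, rfl⟩ := hy2
    obtain ⟨k, rfl⟩ := AddSubgroup.mem_zmultiples_iff.mp hx
    refine ⟨k, fun n hn => ?_⟩
    have := hy1 n hn
    rwa [map_zsmul, Pi.smul_apply] at this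
  · intro hk
    rw [mem_closure_iff_nhds]
    intro Q hQ
    obtain ⟨N, hN⟩ := r.exists_agree_subset hQ
    obtain ⟨k, hkk⟩ := hk N
    refine ⟨k • g, hN fun n hn => ?_, ⟨k, rfl⟩⟩
    rw [map_zsmul, Pi.smul_apply]
    exact hkk n hn

/-- The key arithmetic lemma: if `h ≠ 0` lies in the closure of the cyclic group generated
by `g`, then some `p`-power multiple of `g` is a nonzero element of the closure of the
cyclic group generated by `h`. -/
lemma keyB {p : ℕ} (hp : p.Prime)
    (htors : ∀ n, ∀ a : r.A n, ∃ k : ℕ, (p ^ k : ℕ) • a = 0)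
    {g h : G} (hh : h ≠ 0)
    (hcl : h ∈ closure ((AddSubgroup.zmultiples g : AddSubgroup G) : Set G)) :
    ∃ e : ℕ, (p ^ e : ℕ) • g ≠ 0 ∧
      (p ^ e : ℕ) • g ∈ closure ((AddSubgroup.zmultiples h : AddSubgroup G) : Set G) := by
  classical
  have hW := (r.mem_closure_zmultiples_iff).mp hcl
  have hEh : r.e h ≠ 0 := fun h0 => hh (r.emb.injective (by rw [h0, map_zero]))
  obtain ⟨n₀, hn₀⟩ : ∃ n, r.e h n ≠ 0 := by
    by_contra hc; push_neg at hc; exact hEh (funext fun n => hc n)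
  set Wit : ℕ → ℤ → Prop := fun N k => ∀ n ≤ N + n₀, k • r.e g n = r.e h n with hWitdef
  have hWit : ∀ N, ∃ k, Wit N k := fun N => hW (N + n₀)
  have hkn0 : ∀ {N k}, Wit N k → k • r.e g n₀ = r.e h n₀ := fun w => w n₀ (Nat.le_add_left n₀ _)
  obtain ⟨c₀, hc₀⟩ := htors n₀ (r.e g n₀)
  have hwne : ∀ {N k}, Wit N k → k ≠ 0 := by
    intro N k hk h0
    exact hn₀ (by rw [← hkn0 hk, h0, zero_smul])
  have hdecomp : ∀ k : ℤ, k ≠ 0 →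
      ∃ u : ℤ, k = (p : ℤ) ^ (k.natAbs.factorization p) * u ∧ ¬(p : ℤ) ∣ u := by
    intro k hk0
    set v := k.natAbs.factorization p with hvdef
    have h2 : p ^ v ∣ k.natAbs := Nat.ordProj_dvd k.natAbs p
    have h1 : (p : ℤ) ^ v ∣ k :=
      Int.dvd_natAbs.mp (by exact_mod_cast h2)
    obtain ⟨u, hu⟩ := h1
    refine ⟨u, hu, fun hdvd => ?_⟩
    obtain ⟨d, hd⟩ := hdvd
    have h3 : (p : ℤ) ^ (v + 1) ∣ k := ⟨d, by rw [hu, hd]; ring⟩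
    have h4 : p ^ (v + 1) ∣ k.natAbs := by
      have := Int.natAbs_dvd_natAbs.mpr h3
      simpa [Int.natAbs_pow] using this
    exact Nat.pow_succ_factorization_not_dvd (Int.natAbs_ne_zero.mpr hk0) hp h4
  have exE : ∀ N : ℕ, ∃ v, ∃ k, Wit N k ∧ k.natAbs.factorization p = v :=
    fun N => let ⟨k, hk⟩ := hWit N; ⟨_, k, hk, rfl⟩
  set E : ℕ → ℕ := fun N => Nat.find (exE N) with hEdef
  have Espec : ∀ N, ∃ k, Wit N k ∧ k.natAbs.factorization p = E N :=
    fun N => Nat.find_spec (exE N)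
  have Emono : Monotone E := by
    intro M N hMN
    obtain ⟨k, hk, hv⟩ := Espec N
    exact Nat.find_min' (exE M) ⟨k, fun n hn => hk n (by omega), hv⟩
  have hbound : ∀ N, E N ≤ c₀ := by
    intro N
    obtain ⟨k, hk, hv⟩ := Espec N
    by_contra hgt
    push_neg at hgt
    have h2 : p ^ c₀ ∣ k.natAbs :=
      dvd_trans (pow_dvd_pow p hgt.le) (hv ▸ Nat.ordProj_dvd k.natAbs p)
    have h1 : (p : ℤ) ^ c₀ ∣ k := Int.dvd_natAbs.mp (by exact_mod_cast h2)
    obtain ⟨d, hd⟩ := h1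
    have hz : ((p : ℤ) ^ c₀) • r.e g n₀ = 0 := by
      rw [← Nat.cast_pow, natCast_zsmul]; exact hc₀
    have hzz : k • r.e g n₀ = 0 := by
      rw [hd, mul_comm, mul_smul, hz, smul_zero]
    exact hn₀ (by rw [← hkn0 hk, hzz])
  set P : ℕ → Prop := fun v => ∃ N, E N = v with hPdef
  set v₀ := Nat.findGreatest P c₀ with hv₀def
  have hPv₀ : P v₀ := Nat.findGreatest_spec (hbound 0) ⟨0, rfl⟩
  obtain ⟨N₁, hN₁⟩ := hPv₀
  have Econst : ∀ N, N₁ ≤ N → E N = v₀ := by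
    intro N hN
    refine le_antisymm ?_ (hN₁ ▸ Emono hN)
    by_contra hlt
    push_neg at hlt
    exact Nat.findGreatest_is_greatest hlt (hbound N) ⟨N, rfl⟩
  have hnz : (p ^ v₀ : ℕ) • g ≠ 0 := by
    intro h0
    obtain ⟨k, hk, hv⟩ := Espec N₁
    have hv' : k.natAbs.factorization p = v₀ := hv.trans hN₁
    obtain ⟨u, hku, hpu⟩ := hdecomp k (hwne hk)
    rw [hv'] at hku
    have h2 : (p ^ v₀ : ℕ) • r.e g n₀ = 0 := by
      have h1 : r.e ((p ^ v₀ : ℕ) • g) = 0 := by rw [h0, map_zero]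
      calc (p ^ v₀ : ℕ) • r.e g n₀ = r.e ((p ^ v₀ : ℕ) • g) n₀ := by
              rw [map_nsmul, Pi.smul_apply]
        _ = 0 := by rw [h1]; rfl
    have hzz : ((p : ℤ) ^ v₀) • r.e g n₀ = 0 := by
      rw [← Nat.cast_pow, natCast_zsmul]; exact h2
    have h3 : k • r.e g n₀ = 0 := by
      rw [hku, mul_comm, mul_smul, hzz, smul_zero]
    exact hn₀ (by rw [← hkn0 hk, h3])
  choose cfun hcfun using fun n => htors n (r.e g n)
  have finale : ∀ M : ℕ, ∃ m : ℤ, ∀ n ≤ M, m • r.e h n = ((p : ℤ) ^ v₀) • r.e g n := by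
    intro M
    set N := max N₁ M with hNdef
    obtain ⟨k, hk, hv⟩ := Espec N
    have hv' : k.natAbs.factorization p = v₀ := hv.trans (Econst N (le_max_left _ _))
    obtain ⟨u, hku, hpu⟩ := hdecomp k (hwne hk)
    rw [hv'] at hku
    set L := (Finset.range (N + n₀ + 1)).sup cfun with hLdef
    have hkill : ∀ n ≤ N + n₀, (p ^ L : ℕ) • r.e g n = 0 := by
      intro n hn
      have hcle : cfun n ≤ L := Finset.le_sup (Finset.mem_range.mpr (by omega))
      have hsplit : (p : ℕ) ^ L = p ^ (L - cfun n) * p ^ cfun n := by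
        rw [← pow_add, Nat.sub_add_cancel hcle]
      rw [hsplit, mul_smul, hcfun n, smul_zero]
    have hcop : IsCoprime ((p : ℤ) ^ L) u :=
      (((Nat.prime_iff_prime_int.mp hp).coprime_iff_not_dvd).mpr hpu).pow_left
    obtain ⟨a, b, hab⟩ := hcop
    refine ⟨b, fun n hn => ?_⟩
    have hwn : k • r.e g n = r.e h n := hk n (by omega)
    rw [← hwn, smul_smul]
    apply smul_congr_of_dvd (hkill n (by omega))
    refine ⟨(p : ℤ) ^ v₀ * (-a), ?_⟩
    rw [hku]; push_cast; linear_combination ((p : ℤ) ^ v₀) * hab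
  refine ⟨v₀, hnz, (r.mem_closure_zmultiples_iff).mpr fun M => ?_⟩
  obtain ⟨m, hm⟩ := finale M
  refine ⟨m, fun n hn => ?_⟩
  rw [hm n hn, map_nsmul, Pi.smul_apply, ← natCast_zsmul, Nat.cast_pow]

end QuasiRep

end Helpers

/-- For an abelian quasi-p Polish group `G`: either there is a closed pro-cyclic
subgroup `H ≤ G` such that `G/H` contains a clopen subgroup of bounded exponent, or
the set `D = {(g,g') : cl⟨g⟩ ∩ cl⟨g'⟩ = {0}}` is comeager in `G²`. -/
theorem stmt17 {G : Type*} [AddCommGroup G] [TopologicalSpace G] [IsTopologicalAddGroup G]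
    [PolishSpace G] (p : ℕ) (hp : p.Prime) (hqp : QuasiP G p) :
    (∃ H : AddSubgroup G, IsClosed (H : Set G) ∧ IsCompact (H : Set G) ∧
        TotallyDisconnectedSpace H ∧
        (∃ h ∈ H, closure ((AddSubgroup.zmultiples h : AddSubgroup G) : Set G) = H) ∧
        ∃ U : AddSubgroup (G ⧸ H), IsClopen (U : Set (G ⧸ H)) ∧
          ∃ m : ℕ, 0 < m ∧ ∀ u ∈ U, m • u = 0) ∨
    {x : G × G |
        closure ((AddSubgroup.zmultiples x.1 : AddSubgroup G) : Set G) ∩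
          closure ((AddSubgroup.zmultiples x.2 : AddSubgroup G) : Set G) = {0}} ∈
      residual (G × G) := by
  classical
  obtain ⟨r, htors⟩ := hqp
  set D : Set (G × G) := {x : G × G |
      closure ((AddSubgroup.zmultiples x.1 : AddSubgroup G) : Set G) ∩
        closure ((AddSubgroup.zmultiples x.2 : AddSubgroup G) : Set G) = {0}} with hDdef
  by_cases hD : D ∈ residual (G × G)
  · exact Or.inr hD
  left
  -- the complement of `D` is non-meagre
  have hNmeag : ¬ IsMeagre Dᶜ := by
    intro hm
    unfold IsMeagre at hm
    rw [compl_compl] at hm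
    exact hD hm
  -- basic instances
  haveI hT2 : T2Space G := r.emb.toIsEmbedding.t2Space
  haveI hTDG : TotallyDisconnectedSpace G := by
    constructor
    intro s _ hs
    have h1 : IsPreconnected (r.e '' s) := hs.image _ r.emb.continuous.continuousOn
    have h2 : (r.e '' s).Subsingleton := h1.subsingleton
    exact fun x hx y hy => r.emb.injective (h2 ⟨x, hx, rfl⟩ ⟨y, hy, rfl⟩)
  haveI hBaire : BaireSpace G := by
    letI := TopologicalSpace.upgradeIsCompletelyMetrizable G
    infer_instance
  -- the closed/open pieces
  set Re : ℕ → Set (G × G) := fun e => {x : G × G | (p ^ e : ℕ) • x.1 ∈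
      closure ((AddSubgroup.zmultiples x.2 : AddSubgroup G) : Set G)} with hRedef
  set Oe : ℕ → Set (G × G) := fun e => {x : G × G | (p ^ e : ℕ) • x.1 ≠ 0} with hOedef
  have hReClosed : ∀ e, IsClosed (Re e) := by
    intro e
    rw [← isOpen_compl_iff, isOpen_iff_mem_nhds]
    intro x hx
    have hx' : ¬ ∀ N : ℕ, ∃ k : ℤ, ∀ n ≤ N, k • r.e x.2 n = r.e ((p ^ e : ℕ) • x.1) n := by
      rw [← r.mem_closure_zmultiples_iff]; exact hx
    push_neg at hx'
    obtain ⟨N, hN⟩ := hx'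
    have hmem : ({g : G | ∀ n ≤ N, r.e g n = r.e x.1 n} ×ˢ
        {g : G | ∀ n ≤ N, r.e g n = r.e x.2 n}) ∈ 𝓝 x := by
      exact prod_mem_nhds (r.agree_mem_nhds N x.1) (r.agree_mem_nhds N x.2)
    refine Filter.mem_of_superset hmem ?_
    rintro y ⟨hy1, hy2⟩ hyRe
    obtain ⟨k, hk⟩ := (r.mem_closure_zmultiples_iff).mp hyRe N
    obtain ⟨n, hn, hne⟩ := hN k
    refine hne ?_
    have e1 : r.e y.2 n = r.e x.2 n := hy2 n hn
    have e2 : r.e y.1 n = r.e x.1 n := hy1 n hn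
    have h3 := hk n hn
    rw [e1] at h3
    rw [h3, map_nsmul, map_nsmul, Pi.smul_apply, Pi.smul_apply, e2]
  have hOeOpen : ∀ e, IsOpen (Oe e) := by
    intro e
    have hc : Continuous fun x : G × G => (p ^ e : ℕ) • x.1 :=
      (continuous_nsmul _).comp continuous_fst
    exact (isClosed_singleton (x := (0 : G))).isOpen_compl.preimage hc
  -- the complement of D is contained in the union of the pieces
  have hNsub : Dᶜ ⊆ ⋃ eidx : ℕ, (Oe eidx ∩ Re eidx) := by
    intro x hx
    have hne : ∃ h : G, (h ∈ closure ((AddSubgroup.zmultiples x.1 : AddSubgroup G) : Set G) ∩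
        closure ((AddSubgroup.zmultiples x.2 : AddSubgroup G) : Set G)) ∧ h ≠ 0 := by
      by_contra hc
      push_neg at hc
      apply hx
      apply subset_antisymm
      · intro h hh
        simpa using hc h hh
      · intro h hh
        simp only [Set.mem_singleton_iff] at hh
        subst hh
        exact ⟨subset_closure (zero_mem _), subset_closure (zero_mem _)⟩
    obtain ⟨h, ⟨hh1, hh2⟩, hh0⟩ := hne
    obtain ⟨eidx, hne', hmem⟩ := r.keyB hp htors hh0 hh1
    have hh2' : h ∈ (AddSubgroup.zmultiples x.2).topologicalClosure := hh2
    have hsub : closure ((AddSubgroup.zmultiples h : AddSubgroup G) : Set G) ⊆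
        closure ((AddSubgroup.zmultiples x.2 : AddSubgroup G) : Set G) := by
      refine closure_minimal ?_ isClosed_closure
      intro y hy
      obtain ⟨k, rfl⟩ := AddSubgroup.mem_zmultiples_iff.mp hy
      exact AddSubgroup.zsmul_mem _ hh2' k
    exact Set.mem_iUnion.mpr ⟨eidx, hne', hsub hmem⟩
  -- some piece is non-meagre
  obtain ⟨eidx, hMe⟩ : ∃ e, ¬ IsMeagre (Oe e ∩ Re e) := by
    by_contra hc
    push_neg at hc
    exact hNmeag ((isMeagre_iUnion hc).mono hNsub)
  have hnwd : ¬ IsNowhereDense (Oe eidx ∩ Re eidx) :=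
    fun hnd => hMe (aux_isNowhereDense_isMeagre hnd)
  have hint : (interior (closure (Oe eidx ∩ Re eidx))).Nonempty :=
    Set.nonempty_iff_ne_empty.mpr hnwd
  set Uo := interior (closure (Oe eidx ∩ Re eidx)) with hUodef
  obtain ⟨x₀, hx₀⟩ := hint
  have hUoO : Uo ⊆ closure (Oe eidx) :=
    interior_subset.trans (closure_mono Set.inter_subset_left)
  have hUoR : Uo ⊆ Re eidx := by
    refine interior_subset.trans ?_
    refine (closure_mono Set.inter_subset_right).trans ?_
    rw [(hReClosed eidx).closure_eq]
  have hy : (Uo ∩ Oe eidx).Nonempty :=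
    _root_.mem_closure_iff.mp (hUoO hx₀) Uo isOpen_interior hx₀
  obtain ⟨y, hyU, hyO⟩ := hy
  obtain ⟨Pu, Qu, hPo, hQo, hyP, hyQ, hPQ⟩ :=
    isOpen_prod_iff.mp (isOpen_interior.inter (hOeOpen eidx)) y.1 y.2
      (by simpa using And.intro hyU hyO)
  set g₀ := y.1 with hg₀def
  set g₁ := y.2 with hg₁def
  set h₀ := (p ^ eidx : ℕ) • g₀ with hh₀def
  have hh₀ne : h₀ ≠ 0 := hyO
  obtain ⟨N₂, hN₂⟩ := r.exists_agree_subset (hQo.mem_nhds hyQ)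
  have hWmem : ∀ g' : G, (∀ n ≤ N₂, r.e g' n = r.e g₁ n) →
      h₀ ∈ closure ((AddSubgroup.zmultiples g' : AddSubgroup G) : Set G) := by
    intro g' hg'
    have hmm : (g₀, g') ∈ Uo ∩ Oe eidx := hPQ ⟨hyP, hN₂ hg'⟩
    exact hUoR hmm.1
  -- the pro-cyclic subgroup
  set H := (AddSubgroup.zmultiples h₀).topologicalClosure with hHdef
  have hHcoe : (H : Set G) = closure ((AddSubgroup.zmultiples h₀ : AddSubgroup G) : Set G) :=
    rfl
  -- the subgroups S t
  set φ : ℕ → (G →+ G) := fun t => AddMonoidHom.mk' (fun w => (p ^ t : ℕ) • w)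
    (fun a b => smul_add _ a b) with hφdef
  set S : ℕ → AddSubgroup G := fun t => H.comap (φ t) with hSdef
  have hSClosed : ∀ t, IsClosed (S t : Set G) := by
    intro t
    have : (S t : Set G) = (fun w : G => (p ^ t : ℕ) • w) ⁻¹' (H : Set G) := rfl
    rw [this]
    exact (AddSubgroup.isClosed_topologicalClosure _).preimage (continuous_nsmul _)
  -- the covering of a basic clopen subgroup
  obtain ⟨β, -, hβ2⟩ := r.keyB hp htors hh₀ne (hWmem g₁ (fun n _ => rfl))
  have hβ2' : (p ^ β : ℕ) • g₁ ∈ H := hβ2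
  have hcover : {w : G | ∀ n ≤ N₂, r.e w n = 0} ⊆ ⋃ t : ℕ, (S t : Set G) := by
    intro w hw
    have hg' : ∀ n ≤ N₂, r.e (g₁ + w) n = r.e g₁ n := by
      intro n hn
      have : r.e w n = 0 := hw n hn
      rw [map_add, Pi.add_apply, this, add_zero]
    obtain ⟨α, -, hα2⟩ := r.keyB hp htors hh₀ne (hWmem (g₁ + w) hg')
    have hα2' : (p ^ α : ℕ) • (g₁ + w) ∈ H := hα2
    refine Set.mem_iUnion.mpr ⟨max α β, ?_⟩
    have h1 : (p ^ max α β : ℕ) • (g₁ + w) ∈ H := by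
      have heq : (p ^ max α β : ℕ) • (g₁ + w)
          = (p ^ (max α β - α) : ℕ) • ((p ^ α : ℕ) • (g₁ + w)) := by
        rw [smul_smul, ← pow_add, Nat.sub_add_cancel (le_max_left _ _)]
      rw [heq]
      exact AddSubgroup.nsmul_mem H hα2' _
    have h2 : (p ^ max α β : ℕ) • g₁ ∈ H := by
      have heq : (p ^ max α β : ℕ) • g₁
          = (p ^ (max α β - β) : ℕ) • ((p ^ β : ℕ) • g₁) := by
        rw [smul_smul, ← pow_add, Nat.sub_add_cancel (le_max_right _ _)]
      rw [heq]
      exact AddSubgroup.nsmul_mem H hβ2' _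
    have h3 : (p ^ max α β : ℕ) • w
        = (p ^ max α β : ℕ) • (g₁ + w) - (p ^ max α β : ℕ) • g₁ := by
      rw [smul_add]; abel
    show (p ^ max α β : ℕ) • w ∈ H
    rw [h3]
    exact sub_mem h1 h2
  -- some S t is non-meagre, hence open
  obtain ⟨t, hSt⟩ : ∃ t, ¬ IsMeagre (S t : Set G) := by
    by_contra hc
    push_neg at hc
    have hVm : IsMeagre {w : G | ∀ n ≤ N₂, r.e w n = 0} :=
      (isMeagre_iUnion hc).mono hcover
    have hdense : Dense ({w : G | ∀ n ≤ N₂, r.e w n = 0}ᶜ) := dense_of_mem_residual hVm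
    have hVo : IsOpen {w : G | ∀ n ≤ N₂, r.e w n = 0} := by
      have h := r.isOpen_agree N₂ 0
      simpa using h
    have h0V : (0 : G) ∈ {w : G | ∀ n ≤ N₂, r.e w n = 0} := by
      intro n _
      rw [map_zero]; rfl
    obtain ⟨z, hz1, hz2⟩ := hdense.inter_open_nonempty _ hVo ⟨0, h0V⟩
    exact hz2 hz1
  have hSnwd : ¬ IsNowhereDense (S t : Set G) :=
    fun hx => hSt (aux_isNowhereDense_isMeagre hx)
  have hintS : (interior (S t : Set G)).Nonempty := by
    have : closure (S t : Set G) = (S t : Set G) := (hSClosed t).closure_eq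
    refine Set.nonempty_iff_ne_empty.mpr (fun hempty => hSnwd ?_)
    unfold IsNowhereDense
    rw [this]; exact hempty
  obtain ⟨x₁, hx₁⟩ := hintS
  have hSopen : IsOpen (S t : Set G) :=
    AddSubgroup.isOpen_of_mem_nhds (S t) (mem_interior_iff_mem_nhds.mp hx₁)
  -- compactness of H
  have hcomp : IsCompact (H : Set G) := by
    have hfin : ∀ n, Set.Finite
        ((AddSubgroup.zmultiples (r.e h₀ n) : AddSubgroup (r.A n)) : Set (r.A n)) := by
      intro n
      obtain ⟨c, hc⟩ := htors n (r.e h₀ n)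
      have hpc : 0 < (p ^ c : ℕ) := pow_pos hp.pos c
      have hsub : ((AddSubgroup.zmultiples (r.e h₀ n) : AddSubgroup (r.A n)) : Set (r.A n)) ⊆
          Set.range (fun i : Fin (p ^ c) => ((i : ℕ) : ℤ) • r.e h₀ n) := by
        intro a ha
        obtain ⟨k, rfl⟩ := AddSubgroup.mem_zmultiples_iff.mp ha
        have hne : ((p ^ c : ℕ) : ℤ) ≠ 0 := by exact_mod_cast hpc.ne'
        have hnonneg : 0 ≤ k % ((p ^ c : ℕ) : ℤ) := Int.emod_nonneg k hne
        have hlt : k % ((p ^ c : ℕ) : ℤ) < ((p ^ c : ℕ) : ℤ) :=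
          Int.emod_lt_of_pos k (by exact_mod_cast hpc)
        refine ⟨⟨(k % ((p ^ c : ℕ) : ℤ)).toNat, ?_⟩, ?_⟩
        · exact_mod_cast (Int.toNat_lt hnonneg).mpr hlt
        · show (((k % ((p ^ c : ℕ) : ℤ)).toNat : ℕ) : ℤ) • r.e h₀ n = k • r.e h₀ n
          rw [Int.toNat_of_nonneg hnonneg]
          refine (smul_congr_of_dvd hc ?_).symm
          refine ⟨k / ((p ^ c : ℕ) : ℤ), ?_⟩
          have := Int.mul_ediv_add_emod k ((p ^ c : ℕ) : ℤ)
          linarith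
      exact Set.Finite.subset (Set.finite_range _) hsub
    set T : Set (∀ n, r.A n) := Set.pi Set.univ
      (fun n => ((AddSubgroup.zmultiples (r.e h₀ n) : AddSubgroup (r.A n)) : Set (r.A n)))
      with hTdef
    have hTcomp : IsCompact T := isCompact_univ_pi (fun n => (hfin n).isCompact)
    have hTclosed : IsClosed T := isClosed_set_pi (fun n _ => isClosed_discrete _)
    have himg : r.e '' (H : Set G) ⊆ T := by
      rw [hHcoe]
      refine (image_closure_subset_closure_image r.emb.continuous).trans ?_
      rw [← hTclosed.closure_eq]
      apply closure_mono
      rintro z ⟨x, hx, rfl⟩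
      obtain ⟨k, rfl⟩ := AddSubgroup.mem_zmultiples_iff.mp hx
      intro n _
      rw [map_zsmul, Pi.smul_apply]
      exact AddSubgroup.zsmul_mem _ (AddSubgroup.mem_zmultiples _) k
    have hclosedim : IsClosed (r.e '' (H : Set G)) :=
      r.emb.isClosedMap _ (AddSubgroup.isClosed_topologicalClosure _)
    have hcompim : IsCompact (r.e '' (H : Set G)) :=
      hTcomp.of_isClosed_subset hclosedim himg
    exact r.emb.toIsEmbedding.isCompact_iff.mpr hcompim
  -- assemble everything
  refine ⟨H, AddSubgroup.isClosed_topologicalClosure _, hcomp, inferInstance,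
    ⟨h₀, AddSubgroup.le_topologicalClosure _ (AddSubgroup.mem_zmultiples h₀), hHcoe.symm⟩,
    (S t).map (QuotientAddGroup.mk' H), ⟨?_, ?_⟩, p ^ t, pow_pos hp.pos t, ?_⟩
  · -- closed
    refine AddSubgroup.isClosed_of_isOpen _ ?_
    have : (((S t).map (QuotientAddGroup.mk' H) : AddSubgroup (G ⧸ H)) : Set (G ⧸ H))
        = ((↑) : G → G ⧸ H) '' (S t : Set G) := by
      rw [AddSubgroup.coe_map, QuotientAddGroup.coe_mk']
    rw [this]
    exact QuotientAddGroup.isOpenMap_coe _ hSopen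
  · -- open
    have : (((S t).map (QuotientAddGroup.mk' H) : AddSubgroup (G ⧸ H)) : Set (G ⧸ H))
        = ((↑) : G → G ⧸ H) '' (S t : Set G) := by
      rw [AddSubgroup.coe_map, QuotientAddGroup.coe_mk']
    rw [this]
    exact QuotientAddGroup.isOpenMap_coe _ hSopen
  · -- bounded exponent
    rintro u hu
    obtain ⟨v, hv, rfl⟩ := AddSubgroup.mem_map.mp hu
    have hvH : (p ^ t : ℕ) • v ∈ H := hv
    rw [← map_nsmul]
    show ((((p ^ t : ℕ) • v : G) : G ⧸ H)) = 0
    exact (QuotientAddGroup.eq_zero_iff _).mpr hvH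
end
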